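/- arXiv:1106.4743 — 8 statements merged into one kernel-verified Lean document; each statement's English description precedes it below -/
import Mathlib

section
/- Let $\rho_0,\ldots,\rho_l \in \mathbb{Z}^2$ (with $l > 2$) be the cyclically ordered primitive ray generators of a smooth complete fan, with integers $b_i$ defined by $b_i\rho_i = \rho_{i-1}+\rho_{i+1}$. Suppose $b_0 < 0$. Then there exists a unique index $\alpha$ with $1 < \alpha < l$ such that $\rho_\alpha = -\rho_0$. -/
/-- The determinant of two vectors in `ℤ²`. -/
def det2 (v w : ℤ × ℤ) : ℤ := v.1 * w.2 - v.2 * w.1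

/-- The combinatorial data of a smooth complete toric surface: primitive ray generators
`ρ 0, …, ρ l` in counterclockwise cyclic order (each consecutive pair is a positively
oriented basis of `ℤ²`), self-intersection data `b` with `b i • ρ i = ρ (i-1) + ρ (i+1)`,
the cones covering the plane, and distinct cones having disjoint interiors. -/
structure SmoothCompleteFan (l : ℕ) where
  ρ : ZMod (l + 1) → ℤ × ℤ
  b : ZMod (l + 1) → ℤ
  inj : Function.Injective ρ
  smooth_ccw : ∀ i, det2 (ρ i) (ρ (i + 1)) = 1
  rel : ∀ i, b i • ρ i = ρ (i - 1) + ρ (i + 1)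
  complete : ∀ v : ℤ × ℤ, ∃ (i : ZMod (l + 1)) (a c : ℕ),
      v = (a : ℤ) • ρ i + (c : ℤ) • ρ (i + 1)
  proper : ∀ i j : ZMod (l + 1), i ≠ j → ∀ v : ℤ × ℤ,
      ¬ ((∃ a c : ℕ, 0 < a ∧ 0 < c ∧ v = (a : ℤ) • ρ i + (c : ℤ) • ρ (i + 1)) ∧
         (∃ a c : ℕ, 0 < a ∧ 0 < c ∧ v = (a : ℤ) • ρ j + (c : ℤ) • ρ (j + 1)))

namespace FanAux

lemma det2_neg_left (v w : ℤ × ℤ) : det2 (-v) w = - det2 v w := by simp [det2]; ring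
lemma det2_neg_right (v w : ℤ × ℤ) : det2 v (-w) = - det2 v w := by simp [det2]; ring
lemma det2_swap (v w : ℤ × ℤ) : det2 v w = - det2 w v := by simp [det2]; ring
lemma det2_self (v : ℤ × ℤ) : det2 v v = 0 := by simp [det2]; ring
lemma det2_right (x : ℤ × ℤ) (p q : ℤ) (y z : ℤ × ℤ) :
    det2 x (p • y + q • z) = p * det2 x y + q * det2 x z := by
  simp [det2, Prod.smul_fst, Prod.smul_snd, smul_eq_mul]; ring
lemma det2_left (x : ℤ × ℤ) (p q : ℤ) (y z : ℤ × ℤ) :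
    det2 (p • y + q • z) x = p * det2 y x + q * det2 z x := by
  simp [det2, Prod.smul_fst, Prod.smul_snd, smul_eq_mul]; ring
lemma det2_smul_left (p : ℤ) (y x : ℤ × ℤ) : det2 (p • y) x = p * det2 y x := by
  simp [det2, Prod.smul_fst, Prod.smul_snd, smul_eq_mul]; ring
lemma det2_smul_right (p : ℤ) (x y : ℤ × ℤ) : det2 x (p • y) = p * det2 x y := by
  simp [det2, Prod.smul_fst, Prod.smul_snd, smul_eq_mul]; ring
lemma cramer {x y : ℤ × ℤ} (h : det2 x y = 1) (v : ℤ × ℤ) :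
    v = det2 v y • x + det2 x v • y := by
  have h' : x.1 * y.2 - x.2 * y.1 = 1 := h
  refine Prod.ext ?_ ?_ <;>
    simp only [det2, Prod.fst_add, Prod.snd_add, Prod.smul_fst, Prod.smul_snd, smul_eq_mul]
  · linear_combination (-v.1) * h'
  · linear_combination (-v.2) * h'

variable {l : ℕ}

lemma no_two_cones (F : SmoothCompleteFan l) {k k' : ZMod (l+1)} (hkk' : k ≠ k')
    (v : ℤ × ℤ) (p q p' q' : ℤ) (hp : 1 ≤ p) (hq : 1 ≤ q) (hp' : 0 ≤ p') (hq' : 0 ≤ q')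
    (hv : v = p • F.ρ k + q • F.ρ (k+1)) (hv' : v = p' • F.ρ k' + q' • F.ρ (k'+1)) :
    False := by
  set s : ℤ × ℤ := F.ρ k' + F.ρ (k'+1) with hs_def
  set x := det2 s (F.ρ (k+1)) with hx
  set y := det2 (F.ρ k) s with hy
  have hs : s = x • F.ρ k + y • F.ρ (k+1) := cramer (F.smooth_ccw k) s
  set M : ℤ := |x| + |y| + 1 with hM
  have hxa : -|x| ≤ x := neg_abs_le x
  have hya : -|y| ≤ y := neg_abs_le y
  have hxa' : 0 ≤ |x| := abs_nonneg x
  have hya' : 0 ≤ |y| := abs_nonneg y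
  have hM1 : 1 ≤ M := by omega
  have rep1 : M • v + s = (M*p + x) • F.ρ k + (M*q + y) • F.ρ (k+1) := by
    rw [hv, hs]; module
  have rep2 : M • v + s = (M*p' + 1) • F.ρ k' + (M*q' + 1) • F.ρ (k'+1) := by
    rw [hv', hs_def]; module
  have h1 : 1 ≤ M*p + x := by nlinarith
  have h2 : 1 ≤ M*q + y := by nlinarith
  have h3 : 1 ≤ M*p' + 1 := by nlinarith
  have h4 : 1 ≤ M*q' + 1 := by nlinarith
  refine F.proper k k' hkk' (M • v + s) ⟨⟨(M*p + x).toNat, (M*q + y).toNat, by omega, by omega, ?_⟩,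
    ⟨(M*p' + 1).toNat, (M*q' + 1).toNat, by omega, by omega, ?_⟩⟩
  · rw [Int.toNat_of_nonneg (by omega), Int.toNat_of_nonneg (by omega)]; exact rep1
  · rw [Int.toNat_of_nonneg (by omega), Int.toNat_of_nonneg (by omega)]; exact rep2

lemma step (F : SmoothCompleteFan l) (v : ℤ × ℤ) (k₀ : ZMod (l+1)) (p q : ℤ)
    (hp : 1 ≤ p) (hq : 1 ≤ q) (hrep : v = p • F.ρ k₀ + q • F.ρ (k₀+1))
    (k : ZMod (l+1)) (hk : k₀ ≠ k)
    (h1 : 0 ≤ det2 v (F.ρ (k+1))) (h2 : 0 ≤ det2 (F.ρ k) v) : False :=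
  no_two_cones F hk v p q (det2 v (F.ρ (k+1))) (det2 (F.ρ k) v) hp hq h1 h2 hrep
    (cramer (F.smooth_ccw k) v)

section Main

variable (F : SmoothCompleteFan l)

lemma hL1 : ((l : ℕ) : ZMod (l+1)) + 1 = 0 := by
  rw [show ((l : ℕ) : ZMod (l+1)) + 1 = ((l+1 : ℕ) : ZMod (l+1)) by push_cast; ring,
    ZMod.natCast_self]

lemma cast_ne (m m' : ℕ) (hm : m < l+1) (hm' : m' < l+1) (h : m ≠ m') :
    (m : ZMod (l+1)) ≠ (m' : ZMod (l+1)) := by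
  intro hc
  have := congrArg ZMod.val hc
  rw [ZMod.val_cast_of_lt hm, ZMod.val_cast_of_lt hm'] at this
  exact h this

variable (hb0 : F.b 0 < 0)
include hb0

lemma key' : F.ρ ((l : ℕ) : ZMod (l+1)) = F.b 0 • F.ρ 0 - F.ρ 1 := by
  have h := F.rel 0
  rw [zero_add, show (0 : ZMod (l+1)) - 1 = ((l : ℕ) : ZMod (l+1)) by
    have := hL1 (l := l); linear_combination -this] at h
  have : F.ρ ((l : ℕ) : ZMod (l+1)) + F.ρ 1 = F.b 0 • F.ρ 0 := h.symm
  rw [← this]; abel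

lemma negρ1_rep : -F.ρ 1 = 1 • F.ρ ((l : ℕ) : ZMod (l+1))
    + (-F.b 0) • F.ρ (((l : ℕ) : ZMod (l+1)) + 1) := by
  rw [hL1, key' F hb0, one_smul, neg_smul]
  · abel

lemma negρL_rep : -F.ρ ((l : ℕ) : ZMod (l+1)) = (-F.b 0) • F.ρ 0 + 1 • F.ρ (0 + 1) := by
  rw [zero_add, one_smul, neg_smul, key' F hb0]
  abel

variable (hl : 2 < l)
include hl

lemma W_aux : ∀ n : ℕ, 2 + n ≤ l → 1 ≤ det2 (F.ρ 1) (F.ρ ((2 + n : ℕ) : ZMod (l+1))) := by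
  intro n
  induction n with
  | zero =>
    intro _
    have h := F.smooth_ccw 1
    rw [show (((2 + 0 : ℕ)) : ZMod (l+1)) = (1 : ZMod (l+1)) + 1 by push_cast; ring]
    omega
  | succ n ih =>
    intro hle
    have ihm := ih (by omega)
    by_contra hneg
    push_neg at hneg
    have hk : ((l : ℕ) : ZMod (l+1)) ≠ ((2 + n : ℕ) : ZMod (l+1)) :=
      cast_ne l (2+n) (by omega) (by omega) (by omega)
    refine step F (-F.ρ 1) ((l : ℕ) : ZMod (l+1)) 1 (-F.b 0) le_rfl (by omega)
      (negρ1_rep F hb0) ((2 + n : ℕ) : ZMod (l+1)) hk ?_ ?_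
    · rw [det2_neg_left,
        show ((2 + n : ℕ) : ZMod (l+1)) + 1 = ((2 + (n+1) : ℕ) : ZMod (l+1)) by push_cast; ring]
      omega
    · rw [det2_neg_right, det2_swap]
      omega

lemma W_ge (m : ℕ) (h2 : 2 ≤ m) (hml : m ≤ l) :
    1 ≤ det2 (F.ρ 1) (F.ρ ((m : ℕ) : ZMod (l+1))) := by
  have := W_aux F hb0 hl (m - 2) (by omega)
  rwa [show 2 + (m-2) = m by omega] at this

lemma T_aux : ∀ n : ℕ, ∀ m : ℕ, m + n = l - 1 → 1 ≤ m →
    det2 (F.ρ ((l : ℕ) : ZMod (l+1))) (F.ρ ((m : ℕ) : ZMod (l+1))) ≤ -1 := by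
  intro n
  induction n with
  | zero =>
    intro m hm h1m
    have hml : m = l - 1 := by omega
    subst hml
    have h := F.smooth_ccw (((l-1 : ℕ)) : ZMod (l+1))
    rw [show (((l-1 : ℕ)) : ZMod (l+1)) + 1 = ((l : ℕ) : ZMod (l+1)) by
      rw [show (l : ℕ) = (l-1) + 1 by omega]; push_cast; ring] at h
    rw [det2_swap]
    omega
  | succ n ih =>
    intro m hm h1m
    have ihm := ih (m+1) (by omega) (by omega)
    by_contra hneg
    push_neg at hneg
    have hk : (0 : ZMod (l+1)) ≠ ((m : ℕ) : ZMod (l+1)) := by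
      have := cast_ne (l := l) 0 m (by omega) (by omega) (by omega)
      simpa using this
    refine step F (-F.ρ ((l : ℕ) : ZMod (l+1))) 0 (-F.b 0) 1 (by omega) le_rfl
      (negρL_rep F hb0) ((m : ℕ) : ZMod (l+1)) hk ?_ ?_
    · rw [det2_neg_left,
        show ((m : ℕ) : ZMod (l+1)) + 1 = ((m + 1 : ℕ) : ZMod (l+1)) by push_cast; ring]
      omega
    · rw [det2_neg_right, det2_swap]
      omega

lemma T_le (m : ℕ) (h1 : 1 ≤ m) (hml : m ≤ l - 1) :
    det2 (F.ρ ((l : ℕ) : ZMod (l+1))) (F.ρ ((m : ℕ) : ZMod (l+1))) ≤ -1 :=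
  T_aux F hb0 hl (l - 1 - m) m (by omega) h1


omit hb0 hl in
lemma conclude (β : ZMod (l+1)) (hβ : F.ρ β = - F.ρ 0) (hl' : 2 < l) :
    ∃! α : ℕ, 1 < α ∧ α < l ∧ F.ρ ((α : ℕ) : ZMod (l + 1)) = - F.ρ 0 := by
  have h01 : det2 (F.ρ 0) (F.ρ 1) = 1 := by
    have := F.smooth_ccw 0; rwa [zero_add] at this
  have hzero : det2 (F.ρ 0) (- F.ρ 0) = 0 := by
    rw [det2_neg_right, det2_self]; ring
  have hβ0 : β ≠ 0 := by
    intro h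
    rw [h] at hβ
    have h0 : F.ρ 0 = 0 := by
      have h1 := congrArg Prod.fst hβ
      have h2 := congrArg Prod.snd hβ
      simp only [Prod.fst_neg, Prod.snd_neg] at h1 h2
      refine Prod.ext ?_ ?_ <;> simp <;> omega
    rw [h0] at h01
    simp [det2] at h01
  have hβ1 : β ≠ 1 := by
    intro h
    rw [h] at hβ
    rw [hβ] at h01
    omega
  have hβL : β ≠ ((l : ℕ) : ZMod (l+1)) := by
    intro h
    have hL : det2 (F.ρ ((l : ℕ) : ZMod (l+1))) (F.ρ 0) = 1 := by
      have := F.smooth_ccw ((l : ℕ) : ZMod (l+1)); rwa [hL1] at this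
    rw [h] at hβ
    rw [hβ, det2_neg_left, det2_self] at hL
    omega
  have hval : ((β.val : ℕ) : ZMod (l+1)) = β := ZMod.natCast_rightInverse β
  have hvlt : β.val < l + 1 := ZMod.val_lt β
  have hv0 : β.val ≠ 0 := by
    intro h; apply hβ0; rw [← hval, h]; simp
  have hv1 : β.val ≠ 1 := by
    intro h; apply hβ1; rw [← hval, h]; simp
  have hvl : β.val ≠ l := by
    intro h; apply hβL; rw [← hval, h]
  refine ⟨β.val, ⟨by omega, by omega, by rw [hval]; exact hβ⟩, ?_⟩
  rintro y ⟨hy1, hy2, hy3⟩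
  have : ((y : ℕ) : ZMod (l+1)) = ((β.val : ℕ) : ZMod (l+1)) := by
    apply F.inj
    rw [hy3, hval, hβ]
  have := congrArg ZMod.val this
  rwa [ZMod.val_cast_of_lt (by omega), ZMod.val_cast_of_lt (by omega)] at this

end Main

end FanAux

open FanAux in
/-- If `b 0 < 0` and `l > 2`, there is a unique index `α` with `1 < α < l` and
`ρ α = -ρ 0`. -/
theorem exists_unique_opposite_ray (l : ℕ) (hl : 2 < l) (F : SmoothCompleteFan l)
    (hb0 : F.b 0 < 0) :
    ∃! α : ℕ, 1 < α ∧ α < l ∧ F.ρ (α : ZMod (l + 1)) = - F.ρ 0 := by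
  obtain ⟨i, a, c, hv⟩ := F.complete (- F.ρ 0)
  have h01 : det2 (F.ρ 0) (F.ρ 1) = 1 := by
    have := F.smooth_ccw 0; rwa [zero_add] at this
  have hneg1 : det2 (- F.ρ 0) (F.ρ 1) = -1 := by
    rw [det2_neg_left]; omega
  rcases Nat.eq_zero_or_pos a with ha | ha
  · rcases Nat.eq_zero_or_pos c with hc | hc
    · -- both zero : ρ 0 = 0, contradiction
      exfalso
      rw [ha, hc] at hv
      simp only [Nat.cast_zero, zero_smul, add_zero, zero_add] at hv
      rw [hv] at hneg1
      simp [det2] at hneg1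
    · -- a = 0 : ρ (i+1) = - ρ 0
      rw [ha] at hv
      simp only [Nat.cast_zero, zero_smul, zero_add] at hv
      have hd : (c : ℤ) * det2 (F.ρ (i+1)) (F.ρ 1) = -1 := by
        rw [← det2_smul_left, ← hv]; exact hneg1
      have hc1 : (1 : ℤ) ≤ (c : ℤ) := by exact_mod_cast hc
      set d := det2 (F.ρ (i+1)) (F.ρ 1) with hdd
      have hdneg : d ≤ -1 := by nlinarith
      have : (c : ℤ) ≤ 1 := by nlinarith
      have hceq : (c : ℤ) = 1 := by omega
      rw [hceq, one_smul] at hv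
      exact conclude F (i+1) hv.symm hl
  · rcases Nat.eq_zero_or_pos c with hc | hc
    · -- c = 0 : ρ i = - ρ 0
      rw [hc] at hv
      simp only [Nat.cast_zero, zero_smul, add_zero] at hv
      have hd : (a : ℤ) * det2 (F.ρ i) (F.ρ 1) = -1 := by
        rw [← det2_smul_left, ← hv]; exact hneg1
      have ha1 : (1 : ℤ) ≤ (a : ℤ) := by exact_mod_cast ha
      set d := det2 (F.ρ i) (F.ρ 1) with hdd
      have hdneg : d ≤ -1 := by nlinarith
      have : (a : ℤ) ≤ 1 := by nlinarith
      have haeq : (a : ℤ) = 1 := by omega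
      rw [haeq, one_smul] at hv
      exact conclude F i hv.symm hl
    · -- interior case : contradiction
      exfalso
      have ha1 : (1 : ℤ) ≤ (a : ℤ) := by exact_mod_cast ha
      have hc1 : (1 : ℤ) ≤ (c : ℤ) := by exact_mod_cast hc
      have hsm := F.smooth_ccw i
      have hci : det2 (F.ρ i) (- F.ρ 0) = (c : ℤ) := by
        rw [hv, det2_right, det2_self, hsm]; ring
      have hai : det2 (- F.ρ 0) (F.ρ (i+1)) = (a : ℤ) := by
        rw [hv, det2_left, det2_self, hsm]; ring
      have hzero1 : det2 (F.ρ 0) (- F.ρ 0) = 0 := by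
        rw [det2_neg_right, det2_self]; ring
      have hzero2 : det2 (- F.ρ 0) (F.ρ 0) = 0 := by
        rw [det2_neg_left, det2_self]; ring
      have hi0 : i ≠ 0 := by
        intro h; rw [h, hzero1] at hci; omega
      have hiL : i ≠ ((l : ℕ) : ZMod (l+1)) := by
        intro h
        rw [h, hL1, hzero2] at hai; omega
      have hval : ((i.val : ℕ) : ZMod (l+1)) = i := ZMod.natCast_rightInverse i
      set m := i.val with hm
      have hvlt : m < l + 1 := ZMod.val_lt i
      have hm0 : m ≠ 0 := by
        intro h; apply hi0; rw [← hval, h]; simp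
      have hml : m ≠ l := by
        intro h; apply hiL; rw [← hval, h]
      have hLrho : det2 (F.ρ ((l : ℕ) : ZMod (l+1))) (F.ρ 0) = 1 := by
        have := F.smooth_ccw ((l : ℕ) : ZMod (l+1)); rwa [hL1] at this
      -- two linear identities
      have id1 : (a : ℤ) * det2 (F.ρ 1) (F.ρ i) + (c : ℤ) * det2 (F.ρ 1) (F.ρ (i+1)) = 1 := by
        rw [← det2_right, ← hv, det2_neg_right, det2_swap]; omega
      have id2 : (a : ℤ) * det2 (F.ρ ((l : ℕ) : ZMod (l+1))) (F.ρ i)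
          + (c : ℤ) * det2 (F.ρ ((l : ℕ) : ZMod (l+1))) (F.ρ (i+1)) = -1 := by
        rw [← det2_right, ← hv, det2_neg_right]; omega
      rcases Nat.lt_or_ge m 2 with hm2 | hm2
      · -- m = 1 : use T
        have hm1 : m = 1 := by omega
        have hi1 : i = 1 := by rw [← hval, hm1]; simp
        have hT1 : det2 (F.ρ ((l : ℕ) : ZMod (l+1))) (F.ρ ((1 : ℕ) : ZMod (l+1))) ≤ -1 :=
          T_le F hb0 hl 1 le_rfl (by omega)
        have hT2 : det2 (F.ρ ((l : ℕ) : ZMod (l+1))) (F.ρ ((2 : ℕ) : ZMod (l+1))) ≤ -1 :=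
          T_le F hb0 hl 2 (by omega) (by omega)
        rw [show ((1 : ℕ) : ZMod (l+1)) = i by rw [hi1]; simp] at hT1
        rw [show ((2 : ℕ) : ZMod (l+1)) = i + 1 by rw [hi1]; push_cast; ring] at hT2
        nlinarith
      · -- m ≥ 2 : use W
        have hW1 : 1 ≤ det2 (F.ρ 1) (F.ρ ((m : ℕ) : ZMod (l+1))) :=
          W_ge F hb0 hl m hm2 (by omega)
        have hW2 : 1 ≤ det2 (F.ρ 1) (F.ρ ((m + 1 : ℕ) : ZMod (l+1))) :=
          W_ge F hb0 hl (m+1) (by omega) (by omega)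
        rw [hval] at hW1
        rw [show ((m + 1 : ℕ) : ZMod (l+1)) = i + 1 by push_cast; rw [hval]] at hW2
        nlinarith
end

section
/- Define continued fractions by $[c_k] = c_k$ and $[c_1,\ldots,c_k] = c_1 - 1/[c_2,\ldots,c_k]$ (when defined). Let $\rho_0,\ldots,\rho_l$ be the cyclically ordered rays of a smooth complete fan in $\mathbb{Z}^2$ with self-intersection data $b_i$ (so $b_i\rho_i = \rho_{i-1}+\rho_{i+1}$), $b_0 < 0$, $l > 2$, and let $\alpha$ be the unique index with $1 < \alpha < l$ and $\rho_\alpha = -\rho_0$. Then $[b_1, b_2, \ldots, b_{\alpha-1}]$ is well-defined and equals $0$. -/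
/-- The continued fraction `[c₁,…,c_k] = c₁ - 1/[c₂,…,c_k]`, returning `none` when a
division by zero occurs (i.e. when it is not well defined). -/
def cfVal : List ℚ → Option ℚ
  | [] => none
  | [c] => some c
  | c :: rest =>
    match cfVal rest with
    | none => none
    | some q => if q = 0 then none else some (c - 1 / q)

lemma cfVal_cons (c q : ℚ) (L : List ℚ) (hq : cfVal L = some q) (h0 : q ≠ 0) :
    cfVal (c :: L) = some (c - 1 / q) := by
  match L with
  | [] => simp [cfVal] at hq
  | d :: rest => simp [cfVal, hq, h0]

lemma det2_parallel (v w u : ℤ × ℤ) (h1 : det2 v u = 1) (h0 : det2 v w = 0) :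
    ∃ c : ℤ, w = c • v := by
  refine ⟨w.1 * u.2 - w.2 * u.1, ?_⟩
  have e1 : w.1 = (w.1 * u.2 - w.2 * u.1) * v.1 := by
    simp only [det2] at h1 h0; linear_combination (-w.1) * h1 + u.1 * h0
  have e2 : w.2 = (w.1 * u.2 - w.2 * u.1) * v.2 := by
    simp only [det2] at h1 h0; linear_combination (-w.2) * h1 + u.2 * h0
  ext <;> simp [smul_eq_mul, e1.symm, e2.symm]

/-- If `b 0 < 0`, `l > 2` and `α` is the index with `1 < α < l` and `ρ α = -ρ 0`, then
the continued fraction `[b 1, …, b (α-1)]` is well defined and equals `0`. -/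
theorem cf_of_opposite_ray (l : ℕ) (hl : 2 < l) (F : SmoothCompleteFan l)
    (hb0 : F.b 0 < 0) (α : ℕ) (hα1 : 1 < α) (hαl : α < l)
    (hopp : F.ρ (α : ZMod (l + 1)) = - F.ρ 0) :
    cfVal ((List.range (α - 1)).map
      (fun j => ((F.b (((j + 1 : ℕ) : ZMod (l + 1))) : ℤ) : ℚ))) = some 0 := by
  have hNe : ∀ i j : ℕ, i < l + 1 → j < l + 1 → i ≠ j →
      (i : ZMod (l + 1)) ≠ (j : ZMod (l + 1)) := by
    intro i j hi hj hij h
    apply hij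
    have hv := congrArg ZMod.val h
    rwa [ZMod.val_cast_of_lt hi, ZMod.val_cast_of_lt hj] at hv
  set D : ℕ → ℤ := fun i => det2 (F.ρ (i : ZMod (l + 1))) (F.ρ (α : ZMod (l + 1)))
    with hD
  have hD0 : D 0 = 0 := by
    simp only [hD, Nat.cast_zero, hopp, det2, Prod.fst_neg, Prod.snd_neg]; ring
  have hDα : D α = 0 := by
    simp only [hD, det2]; ring
  have hcast : ((α - 1 : ℕ) : ZMod (l + 1)) + 1 = (α : ZMod (l + 1)) := by
    have h : ((α - 1 + 1 : ℕ) : ZMod (l + 1)) = (α : ZMod (l + 1)) := by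
      congr 1; omega
    push_cast at h
    exact h
  have hDa1 : D (α - 1) = 1 := by
    have h := F.smooth_ccw ((α - 1 : ℕ) : ZMod (l + 1))
    rw [hcast] at h
    exact h
  have hrec : ∀ i : ℕ, 1 ≤ i →
      F.b (i : ZMod (l + 1)) * D i = D (i - 1) + D (i + 1) := by
    intro i hi
    have h := F.rel (i : ZMod (l + 1))
    have c1 : ((i : ZMod (l + 1)) - 1) = ((i - 1 : ℕ) : ZMod (l + 1)) := by
      rw [Nat.cast_sub hi, Nat.cast_one]
    have c2 : ((i : ZMod (l + 1)) + 1) = ((i + 1 : ℕ) : ZMod (l + 1)) := by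
      push_cast; ring
    rw [c1, c2] at h
    have h1 := congrArg Prod.fst h
    have h2 := congrArg Prod.snd h
    simp only [Prod.smul_fst, Prod.smul_snd, Prod.fst_add, Prod.snd_add,
      smul_eq_mul] at h1 h2
    simp only [hD, det2]
    linear_combination (F.ρ (α : ZMod (l + 1))).2 * h1 - (F.ρ (α : ZMod (l + 1))).1 * h2
  have hDnz : ∀ i : ℕ, 1 ≤ i → i ≤ α - 1 → D i ≠ 0 := by
    intro i h1 h2 h0
    simp only [hD] at h0
    obtain ⟨c, hc⟩ := det2_parallel (F.ρ (i : ZMod (l + 1))) (F.ρ (α : ZMod (l + 1)))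
      (F.ρ ((i : ZMod (l + 1)) + 1)) (F.smooth_ccw _) h0
    have hu := F.smooth_ccw (α : ZMod (l + 1))
    rw [hc] at hu
    have hmul : c * det2 (F.ρ (i : ZMod (l + 1))) (F.ρ ((α : ZMod (l + 1)) + 1)) = 1 := by
      simp only [det2, Prod.smul_fst, Prod.smul_snd, smul_eq_mul] at hu ⊢
      linear_combination hu
    have hcu : c = 1 ∨ c = -1 := Int.isUnit_iff.mp (IsUnit.of_mul_eq_one _ hmul)
    rcases hcu with rfl | rfl
    · rw [one_smul] at hc
      exact hNe α i (by omega) (by omega) (by omega) (F.inj hc)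
    · rw [neg_one_smul] at hc
      have hne : F.ρ 0 = F.ρ (i : ZMod (l + 1)) := neg_injective (hopp.symm.trans hc)
      have h00 : ((0 : ℕ) : ZMod (l + 1)) = 0 := Nat.cast_zero
      exact hNe 0 i (by omega) (by omega) (by omega) (by rw [h00]; exact F.inj hne)
  have key : ∀ k : ℕ, 1 ≤ k → k ≤ α - 1 →
      cfVal ((List.range k).map
        (fun t => ((F.b (((α - k + t : ℕ) : ZMod (l + 1))) : ℤ) : ℚ)))
        = some ((D (α - 1 - k) : ℚ) / (D (α - k) : ℚ)) := by
    intro k hk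
    induction k, hk using Nat.le_induction with
    | base =>
      intro _
      have h := hrec (α - 1) (by omega)
      rw [hDa1, mul_one, show α - 1 + 1 = α from by omega, hDα, add_zero] at h
      rw [show List.range 1 = [0] from rfl, List.map_cons, List.map_nil]
      simp only [Nat.add_zero]
      rw [show cfVal [((F.b (((α - 1 : ℕ) : ZMod (l + 1))) : ℤ) : ℚ)] =
            some ((F.b (((α - 1 : ℕ) : ZMod (l + 1))) : ℤ) : ℚ) from rfl, h, hDa1]
      norm_num
    | succ k hk ih =>
      intro hk2
      have hik := ih (by omega)
      have hib : α - (k + 1) = α - 1 - k := by omega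
      have hib2 : α - 1 - (k + 1) = α - 1 - k - 1 := by omega
      have hib3 : α - k = α - 1 - k + 1 := by omega
      rw [hib3] at hik
      have hDi : (D (α - 1 - k) : ℚ) ≠ 0 :=
        Int.cast_ne_zero.mpr (hDnz (α - 1 - k) (by omega) (by omega))
      have hDi1 : (D (α - 1 - k + 1) : ℚ) ≠ 0 :=
        Int.cast_ne_zero.mpr (hDnz (α - 1 - k + 1) (by omega) (by omega))
      have hq0 : (D (α - 1 - k) : ℚ) / (D (α - 1 - k + 1) : ℚ) ≠ 0 :=
        div_ne_zero hDi hDi1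
      rw [hib2, hib, List.range_succ_eq_map, List.map_cons, List.map_map]
      have hfun : ((fun t => ((F.b (((α - 1 - k + t : ℕ) : ZMod (l + 1))) : ℤ) : ℚ))
            ∘ Nat.succ)
          = (fun t => ((F.b (((α - 1 - k + 1 + t : ℕ) : ZMod (l + 1))) : ℤ) : ℚ)) := by
        funext t
        simp only [Function.comp_apply]
        have he : α - 1 - k + Nat.succ t = α - 1 - k + 1 + t := by omega
        rw [he]
      simp only [Nat.add_zero, hfun]
      rw [cfVal_cons _ _ _ hik hq0]
      have hr := hrec (α - 1 - k) (by omega)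
      have hrQ : (F.b (((α - 1 - k : ℕ)) : ZMod (l + 1)) : ℚ) * (D (α - 1 - k) : ℚ)
          = (D (α - 1 - k - 1) : ℚ) + (D (α - 1 - k + 1) : ℚ) := by
        exact_mod_cast congrArg (Int.cast : ℤ → ℚ) hr
      congr 1
      field_simp
      linear_combination hrQ
  have hmain := key (α - 1) (by omega) le_rfl
  rw [show α - 1 - (α - 1) = 0 from by omega, show α - (α - 1) = 1 from by omega,
    hD0] at hmain
  have hfun2 : (fun t => ((F.b (((1 + t : ℕ)) : ZMod (l + 1)) : ℤ) : ℚ))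
      = (fun j => ((F.b (((j + 1 : ℕ)) : ZMod (l + 1)) : ℤ) : ℚ)) := by
    funext t
    have he : 1 + t = t + 1 := Nat.add_comm 1 t
    rw [he]
  rw [hfun2] at hmain
  simpa using hmain
end

section
/- With notation as above ($\rho_0,\ldots,\rho_l$ rays of a smooth complete fan with $b_0<0$, $l>2$, $\alpha$ the unique index with $\rho_\alpha = -\rho_0$), define $\gamma = \sum_{i=1}^{\alpha-1}(3 - b_i) - 3$. Then $\gamma \geq 0$ and $b_0 + b_\alpha - \gamma \geq 0$. -/
lemma det2_self (v : ℤ × ℤ) : det2 v v = 0 := by simp [det2]; ring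

lemma det2_swap (u w : ℤ × ℤ) : det2 u w = - det2 w u := by simp [det2]; ring

lemma det2_neg_right (u w : ℤ × ℤ) : det2 u (-w) = - det2 u w := by simp [det2]; ring

lemma det2_sub_right (u a b : ℤ × ℤ) : det2 u (a - b) = det2 u a - det2 u b := by
  simp [det2]; ring

lemma det2_sub_left (a b u : ℤ × ℤ) : det2 (a - b) u = det2 a u - det2 b u := by
  simp [det2]; ring

lemma det2_add_right (u a b : ℤ × ℤ) : det2 u (a + b) = det2 u a + det2 u b := by
  simp [det2]; ring

lemma det2_smul_right (t : ℤ) (u w : ℤ × ℤ) : det2 u (t • w) = t * det2 u w := by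
  simp [det2, Prod.smul_fst, Prod.smul_snd, smul_eq_mul]; ring

lemma det2_smul_left (t : ℤ) (u w : ℤ × ℤ) : det2 (t • u) w = t * det2 u w := by
  simp [det2, Prod.smul_fst, Prod.smul_snd, smul_eq_mul]; ring

lemma cramer {u v : ℤ × ℤ} (h : det2 u v = 1) (w : ℤ × ℤ) :
    w = det2 w v • u + det2 u w • v := by
  have h' : u.1 * v.2 - u.2 * v.1 = 1 := h
  have e1 : (det2 w v • u + det2 u w • v).1
      = (w.1 * v.2 - w.2 * v.1) * u.1 + (u.1 * w.2 - u.2 * w.1) * v.1 := by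
    simp [det2, Prod.smul_fst, smul_eq_mul]
  have e2 : (det2 w v • u + det2 u w • v).2
      = (w.1 * v.2 - w.2 * v.1) * u.2 + (u.1 * w.2 - u.2 * w.1) * v.2 := by
    simp [det2, Prod.smul_snd, smul_eq_mul]
  refine Prod.ext ?_ ?_
  · rw [e1]; linear_combination (-w.1) * h'
  · rw [e2]; linear_combination (-w.2) * h'

lemma sum_Ico_shift (f : ℕ → ℤ) (a b : ℕ) :
    ∑ i ∈ Finset.Ico a b, f (i + 1) = ∑ i ∈ Finset.Ico (a+1) (b+1), f i := by
  rw [Finset.sum_Ico_eq_sum_range, Finset.sum_Ico_eq_sum_range]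
  have : b + 1 - (a + 1) = b - a := by omega
  rw [this]
  exact Finset.sum_congr rfl fun i _ => by congr 1; omega

lemma sum_Ico_split (f : ℕ → ℤ) {a b c : ℕ} (h1 : a ≤ b) (h2 : b ≤ c) :
    ∑ i ∈ Finset.Ico a c, f i = ∑ i ∈ Finset.Ico a b, f i + ∑ i ∈ Finset.Ico b c, f i :=
  (Finset.sum_Ico_consecutive _ h1 h2).symm

lemma sum_Ico_single (f : ℕ → ℤ) (b : ℕ) : ∑ i ∈ Finset.Ico b (b+1), f i = f b := by
  rw [Finset.sum_Ico_succ_top le_rfl, Finset.Ico_self, Finset.sum_empty, zero_add]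



lemma sum_Ico_single' (f : ℕ → ℤ) {a b : ℕ} (h : b = a + 1) :
    ∑ i ∈ Finset.Ico a b, f i = f a := by subst h; exact sum_Ico_single f a


lemma chain_sum : ∀ n : ℕ, 2 ≤ n → ∀ v : ℕ → ℤ × ℤ,
    (∀ i, i < n → det2 (v i) (v (i+1)) = 1) →
    (∀ i, 0 < i → i < n → 1 ≤ det2 (v 0) (v i)) →
    v n = - v 0 →
    ∑ i ∈ Finset.Ico 1 n, (3 - det2 (v (i-1)) (v (i+1))) = 3 + det2 (v 1) (v (n-1)) := by
  intro n
  induction n using Nat.strong_induction_on with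
  | _ n IH =>
    intro hn v h1 h2 h3
    rcases eq_or_lt_of_le hn with h2n | h3n
    · -- base case n = 2
      rw [← h2n] at h3 ⊢
      rw [show (2:ℕ) - 1 = 1 from rfl]
      rw [show Finset.Ico 1 2 = {1} from rfl, Finset.sum_singleton]
      rw [show (1:ℕ) - 1 = 0 from rfl, show (1:ℕ) + 1 = 2 from rfl, h3,
        det2_neg_right, det2_self, det2_self]
      ring
    · -- main case : 3 ≤ n
      have hn3 : 3 ≤ n := h3n
      -- pick the rightmost maximizer of Y j = det2 (v 0) (v j) on Ico 1 n
      obtain ⟨i₀, hi₀mem, hmax⟩ := Finset.exists_max_image (Finset.Ico 1 n)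
        (fun j => det2 (v 0) (v j) * (n:ℤ) + (j:ℤ)) ⟨1, Finset.mem_Ico.mpr ⟨le_refl 1, by omega⟩⟩
      obtain ⟨hi₀1, hi₀n⟩ := Finset.mem_Ico.mp hi₀mem
      have hnz : (0:ℤ) ≤ (n:ℤ) := by positivity
      have hYi₀ : 1 ≤ det2 (v 0) (v i₀) := h2 i₀ hi₀1 hi₀n
      have hmaxY : ∀ j, 1 ≤ j → j < n → det2 (v 0) (v j) ≤ det2 (v 0) (v i₀) := by
        intro j hj1 hjn
        have h := hmax j (Finset.mem_Ico.mpr ⟨hj1, hjn⟩)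
        by_contra hc
        push_neg at hc
        have h1' : det2 (v 0) (v i₀) + 1 ≤ det2 (v 0) (v j) := hc
        have hin : (i₀:ℤ) < (n:ℤ) := by exact_mod_cast hi₀n
        have hj0 : (0:ℤ) ≤ (j:ℤ) := by positivity
        nlinarith [mul_le_mul_of_nonneg_right h1' hnz]
      have hYn : det2 (v 0) (v n) = 0 := by rw [h3, det2_neg_right, det2_self]; ring
      have hYsucc : det2 (v 0) (v (i₀+1)) ≤ det2 (v 0) (v i₀) - 1 := by
        by_cases hc : i₀ + 1 < n
        · have h := hmax (i₀+1) (Finset.mem_Ico.mpr ⟨by omega, hc⟩)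
          by_contra hcc
          push_neg at hcc
          have h1' : det2 (v 0) (v i₀) ≤ det2 (v 0) (v (i₀+1)) := by omega
          have : ((i₀:ℕ):ℤ) < ((i₀+1 : ℕ):ℤ) := by exact_mod_cast Nat.lt_succ_self i₀
          nlinarith [mul_le_mul_of_nonneg_right h1' hnz]
        · have : i₀ + 1 = n := by omega
          rw [this, hYn]; omega
      have hYpred : det2 (v 0) (v (i₀-1)) ≤ det2 (v 0) (v i₀) := by
        rcases Nat.lt_or_ge i₀ 2 with hc | hc
        · have : i₀ - 1 = 0 := by omega
          rw [this, det2_self]; omega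
        · exact hmaxY (i₀-1) (by omega) (by omega)
      have hsum1 : 1 ≤ det2 (v 0) (v (i₀-1)) + det2 (v 0) (v (i₀+1)) := by
        have hplus : 0 ≤ det2 (v 0) (v (i₀+1)) := by
          by_cases hc : i₀ + 1 < n
          · linarith [h2 (i₀+1) (by omega) hc]
          · rw [show i₀ + 1 = n by omega, hYn]
        rcases Nat.lt_or_ge i₀ 2 with hc | hc
        · have hi1 : i₀ = 1 := by omega
          have h2' : 1 ≤ det2 (v 0) (v 2) := h2 2 (by omega) (by omega)
          rw [hi1]
          rw [show (1:ℕ) - 1 = 0 from rfl, show (1:ℕ) + 1 = 2 from rfl, det2_self]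
          omega
        · linarith [h2 (i₀-1) (by omega) (by omega), hplus]
      -- the blow-down relation at i₀
      have hb1 : det2 (v (i₀-1)) (v i₀) = 1 := by
        have := h1 (i₀-1) (by omega)
        rwa [show i₀ - 1 + 1 = i₀ by omega] at this
      have hbplus : det2 (v (i₀+1)) (v i₀) = -1 := by
        rw [det2_swap, h1 i₀ hi₀n]
      have hcr := cramer hb1 (v (i₀+1))
      rw [hbplus] at hcr
      have hYeq : det2 (v 0) (v (i₀+1))
          = - det2 (v 0) (v (i₀-1)) + det2 (v (i₀-1)) (v (i₀+1)) * det2 (v 0) (v i₀) := by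
        nth_rewrite 1 [hcr]
        rw [det2_add_right, det2_smul_right, det2_smul_right]; ring
      have hble : det2 (v (i₀-1)) (v (i₀+1)) ≤ 1 := by
        by_contra hcc
        push_neg at hcc
        have h2b : (2:ℤ) ≤ det2 (v (i₀-1)) (v (i₀+1)) := hcc
        nlinarith [mul_le_mul_of_nonneg_right h2b (by linarith : (0:ℤ) ≤ det2 (v 0) (v i₀))]
      have hbge : 1 ≤ det2 (v (i₀-1)) (v (i₀+1)) := by
        by_contra hcc
        push_neg at hcc
        have hb0 : det2 (v (i₀-1)) (v (i₀+1)) ≤ 0 := by omega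
        nlinarith [mul_nonpos_of_nonpos_of_nonneg hb0 (by linarith : (0:ℤ) ≤ det2 (v 0) (v i₀))]
      have hbval : det2 (v (i₀-1)) (v (i₀+1)) = 1 := le_antisymm hble hbge
      have hvec : v (i₀+1) = v i₀ - v (i₀-1) := by
        rw [hcr, hbval]
        refine Prod.ext ?_ ?_ <;>
          simp [Prod.smul_fst, Prod.smul_snd, smul_eq_mul] <;> ring
      -- the contracted chain
      set w : ℕ → ℤ × ℤ := fun j => if j < i₀ then v j else v (j+1) with hw
      have hwlt : ∀ j, j < i₀ → w j = v j := fun j hj => if_pos hj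
      have hwge : ∀ j, i₀ ≤ j → w j = v (j+1) := fun j hj => if_neg (by omega)
      have hw0 : w 0 = v 0 := hwlt 0 (by omega)
      have h1' : ∀ i, i < n - 1 → det2 (w i) (w (i+1)) = 1 := by
        intro i hi
        rcases lt_trichotomy (i+1) i₀ with h | h | h
        · rw [hwlt i (by omega), hwlt (i+1) h]; exact h1 i (by omega)
        · rw [hwlt i (by omega), hwge (i+1) (by omega)]
          rw [show i + 1 + 1 = i₀ + 1 by omega, show i = i₀ - 1 by omega]
          exact hbval
        · rw [hwge i (by omega), hwge (i+1) (by omega)]; exact h1 (i+1) (by omega)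
      have h2' : ∀ i, 0 < i → i < n - 1 → 1 ≤ det2 (w 0) (w i) := by
        intro i hi0 hin
        rw [hw0]
        by_cases hc : i < i₀
        · rw [hwlt i hc]; exact h2 i hi0 (by omega)
        · rw [hwge i (by omega)]; exact h2 (i+1) (by omega) (by omega)
      have h3' : w (n-1) = - w 0 := by
        rw [hw0, hwge (n-1) (by omega), show n - 1 + 1 = n by omega]; exact h3
      have key := IH (n-1) (by omega) (by omega) w h1' h2' h3'
      -- adjustment identities
      have hstep_succ : i₀ + 1 < n →
          det2 (v (i₀-1)) (v (i₀+2)) = det2 (v i₀) (v (i₀+2)) - 1 := by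
        intro hc
        have h := h1 (i₀+1) hc
        rw [hvec, det2_sub_left] at h
        rw [show i₀ + 1 + 1 = i₀ + 2 by omega] at h
        linarith
      have hstep_pred : 2 ≤ i₀ →
          det2 (v (i₀-2)) (v (i₀+1)) = det2 (v (i₀-2)) (v i₀) - 1 := by
        intro hc
        have h := h1 (i₀-2) (by omega)
        rw [show i₀ - 2 + 1 = i₀ - 1 by omega] at h
        rw [hvec, det2_sub_right, h]
      -- value of the contracted term
      have hfval : (3 : ℤ) - det2 (v (i₀-1)) (v (i₀+1)) = 2 := by rw [hbval]; norm_num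
      have hY01 : det2 (v 0) (v 1) = 1 := h1 0 (by omega)
      -- now three cases on the position of i₀
      by_cases hA : i₀ = 1
      · -- i₀ = 1
        subst hA
        have hw1 : w 1 = v 2 := hwge 1 le_rfl
        have hwn2 : w (n-2) = v (n-1) := by
          rw [hwge (n-2) (by omega)]; congr 1; omega
        have hsucc := hstep_succ (by omega)
        rw [show (1:ℕ) - 1 = 0 from rfl, show (1:ℕ) + 2 = 3 from rfl] at hsucc
        have hYn1 : det2 (v 0) (v (n-1)) = 1 := by
          have h := h1 (n-1) (by omega)
          rw [show n-1+1 = n by omega, h3, det2_neg_right] at h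
          rw [det2_swap]; linarith
        have hv2 : v 1 - v 2 = v 0 := by
          rw [show (2:ℕ) = 1 + 1 from rfl, hvec, show (1:ℕ) - 1 = 0 from rfl]; abel
        have hRHS : det2 (v 1) (v (n-1)) = det2 (v 2) (v (n-1)) + 1 := by
          have h := det2_sub_left (v 1) (v 2) (v (n-1))
          rw [hv2, hYn1] at h; linarith
        have eL : ∑ i ∈ Finset.Ico 1 n, (3 - det2 (v (i-1)) (v (i+1)))
            = (3 - det2 (v 0) (v 2)) + (3 - det2 (v 1) (v 3))
              + ∑ i ∈ Finset.Ico 3 n, (3 - det2 (v (i-1)) (v (i+1))) := by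
          rw [sum_Ico_split _ (show (1:ℕ) ≤ 3 by omega) (show 3 ≤ n by omega),
            show Finset.Ico 1 3 = {1, 2} from rfl, Finset.sum_pair (by norm_num)]
        have eK : ∑ i ∈ Finset.Ico 1 (n-1), (3 - det2 (w (i-1)) (w (i+1)))
            = (3 - det2 (v 0) (v 3))
              + ∑ i ∈ Finset.Ico 3 n, (3 - det2 (v (i-1)) (v (i+1))) := by
          rw [sum_Ico_split _ (show (1:ℕ) ≤ 2 by omega) (show 2 ≤ n-1 by omega),
            show Finset.Ico 1 2 = {1} from rfl, Finset.sum_singleton]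
          congr 1
          · have hcg : ∀ i ∈ Finset.Ico 2 (n-1),
                (3 - det2 (w (i-1)) (w (i+1)))
                  = (fun j => 3 - det2 (v (j-1)) (v (j+1))) (i+1) := by
              intro i hi
              obtain ⟨hi2, hin⟩ := Finset.mem_Ico.mp hi
              simp only
              rw [hwge (i-1) (by omega), hwge (i+1) (by omega),
                show i - 1 + 1 = i by omega, show i + 1 + 1 = i + 2 by omega,
                show i + 1 - 1 = i by omega]
            rw [Finset.sum_congr rfl hcg, sum_Ico_shift
              (fun j => 3 - det2 (v (j-1)) (v (j+1))) 2 (n-1),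
              show (2:ℕ) + 1 = 3 from rfl, show n - 1 + 1 = n by omega]
        rw [show (1:ℕ) - 1 = 0 from rfl, show (1:ℕ) + 1 = 2 from rfl] at hfval
        rw [eL]
        rw [eK, show n - 1 - 1 = n - 2 by omega, hw1, hwn2] at key
        linarith
      · by_cases hB : i₀ = n - 1
        · -- i₀ = n - 1, with 2 ≤ i₀
          have hi₀2 : 2 ≤ i₀ := by omega
          have hpred := hstep_pred hi₀2
          have hw1 : w 1 = v 1 := hwlt 1 (by omega)
          have hwn2 : w (n-2) = v (n-2) := hwlt (n-2) (by omega)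
          have hvn : v n = v (n-1) - v (n-2) := by
            have h := hvec
            rw [show i₀ + 1 = n by omega] at h
            rw [show i₀ = n - 1 by omega, show n - 1 - 1 = n - 2 by omega] at h
            exact h
          have hRHS : det2 (v 1) (v (n-1)) = det2 (v 1) (v (n-2)) + 1 := by
            have h := det2_sub_right (v 1) (v (n-1)) (v (n-2))
            rw [← hvn, h3, det2_neg_right] at h
            rw [det2_swap (v 1) (v 0)] at h
            linarith
          have eL : ∑ i ∈ Finset.Ico 1 n, (3 - det2 (v (i-1)) (v (i+1)))
              = (∑ i ∈ Finset.Ico 1 (i₀-1), (3 - det2 (v (i-1)) (v (i+1))))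
                + (3 - det2 (v (i₀-1-1)) (v (i₀-1+1)))
                + (3 - det2 (v (i₀-1)) (v (i₀+1))) := by
            rw [sum_Ico_split _ (show (1:ℕ) ≤ i₀-1 by omega) (show i₀-1 ≤ n by omega),
              sum_Ico_split _ (show i₀-1 ≤ i₀ by omega) (show i₀ ≤ n by omega),
              sum_Ico_single' _ (show i₀ = (i₀-1) + 1 by omega),
              sum_Ico_single' _ (show n = i₀ + 1 by omega)]
            ring
          have eK : ∑ i ∈ Finset.Ico 1 (n-1), (3 - det2 (w (i-1)) (w (i+1)))
              = (∑ i ∈ Finset.Ico 1 (i₀-1), (3 - det2 (v (i-1)) (v (i+1))))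
                + (3 - det2 (v (i₀-2)) (v (i₀+1))) := by
            rw [sum_Ico_split _ (show (1:ℕ) ≤ i₀-1 by omega) (show i₀-1 ≤ n-1 by omega),
              sum_Ico_single' _ (show n-1 = (i₀-1) + 1 by omega)]
            congr 1
            · refine Finset.sum_congr rfl fun i hi => ?_
              obtain ⟨hi1, hin⟩ := Finset.mem_Ico.mp hi
              rw [hwlt (i-1) (by omega), hwlt (i+1) (by omega)]
            · rw [hwlt (i₀-1-1) (by omega), hwge (i₀-1+1) (by omega),
                show i₀ - 1 - 1 = i₀ - 2 by omega, show i₀ - 1 + 1 + 1 = i₀ + 1 by omega]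
          rw [eL]
          rw [eK, show n - 1 - 1 = n - 2 by omega, hw1, hwn2] at key
          have hf2 : (3:ℤ) - det2 (v (i₀-1-1)) (v (i₀-1+1))
              = 3 - det2 (v (i₀-2)) (v i₀) := by
            rw [show i₀ - 1 - 1 = i₀ - 2 by omega, show i₀ - 1 + 1 = i₀ by omega]
          linarith
        · -- 2 ≤ i₀ ≤ n - 2
          have hi₀2 : 2 ≤ i₀ := by omega
          have hi₀n2 : i₀ + 1 < n := by omega
          have hpred := hstep_pred hi₀2
          have hsucc := hstep_succ hi₀n2
          have hw1 : w 1 = v 1 := hwlt 1 (by omega)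
          have hwn2 : w (n-2) = v (n-1) := by
            rw [hwge (n-2) (by omega)]; congr 1; omega
          have eL : ∑ i ∈ Finset.Ico 1 n, (3 - det2 (v (i-1)) (v (i+1)))
              = (∑ i ∈ Finset.Ico 1 (i₀-1), (3 - det2 (v (i-1)) (v (i+1))))
                + (3 - det2 (v (i₀-1-1)) (v (i₀-1+1)))
                + (3 - det2 (v (i₀-1)) (v (i₀+1)))
                + (3 - det2 (v (i₀+1-1)) (v (i₀+1+1)))
                + ∑ i ∈ Finset.Ico (i₀+2) n, (3 - det2 (v (i-1)) (v (i+1))) := by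
            rw [sum_Ico_split _ (show (1:ℕ) ≤ i₀-1 by omega) (show i₀-1 ≤ n by omega),
              sum_Ico_split _ (show i₀-1 ≤ i₀ by omega) (show i₀ ≤ n by omega),
              sum_Ico_split _ (show i₀ ≤ i₀+1 by omega) (show i₀+1 ≤ n by omega),
              sum_Ico_split _ (show i₀+1 ≤ i₀+2 by omega) (show i₀+2 ≤ n by omega),
              sum_Ico_single' _ (show i₀ = (i₀-1) + 1 by omega),
              sum_Ico_single _,
              sum_Ico_single' _ (show i₀+2 = (i₀+1) + 1 by omega)]
            ring
          have eK : ∑ i ∈ Finset.Ico 1 (n-1), (3 - det2 (w (i-1)) (w (i+1)))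
              = (∑ i ∈ Finset.Ico 1 (i₀-1), (3 - det2 (v (i-1)) (v (i+1))))
                + (3 - det2 (v (i₀-2)) (v (i₀+1)))
                + (3 - det2 (v (i₀-1)) (v (i₀+2)))
                + ∑ i ∈ Finset.Ico (i₀+2) n, (3 - det2 (v (i-1)) (v (i+1))) := by
            rw [sum_Ico_split _ (show (1:ℕ) ≤ i₀-1 by omega) (show i₀-1 ≤ n-1 by omega),
              sum_Ico_split _ (show i₀-1 ≤ i₀ by omega) (show i₀ ≤ n-1 by omega),
              sum_Ico_split _ (show i₀ ≤ i₀+1 by omega) (show i₀+1 ≤ n-1 by omega),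
              sum_Ico_single' _ (show i₀ = (i₀-1) + 1 by omega),
              sum_Ico_single _]
            have ec1 : ∑ i ∈ Finset.Ico 1 (i₀-1), (3 - det2 (w (i-1)) (w (i+1)))
                = ∑ i ∈ Finset.Ico 1 (i₀-1), (3 - det2 (v (i-1)) (v (i+1))) := by
              refine Finset.sum_congr rfl fun i hi => ?_
              obtain ⟨hi1, hin⟩ := Finset.mem_Ico.mp hi
              rw [hwlt (i-1) (by omega), hwlt (i+1) (by omega)]
            have ec2 : (3:ℤ) - det2 (w (i₀-1-1)) (w (i₀-1+1))
                = 3 - det2 (v (i₀-2)) (v (i₀+1)) := by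
              rw [hwlt (i₀-1-1) (by omega), hwge (i₀-1+1) (by omega),
                show i₀ - 1 - 1 = i₀ - 2 by omega, show i₀ - 1 + 1 + 1 = i₀ + 1 by omega]
            have ec3 : (3:ℤ) - det2 (w (i₀-1)) (w (i₀+1))
                = 3 - det2 (v (i₀-1)) (v (i₀+2)) := by
              rw [hwlt (i₀-1) (by omega), hwge (i₀+1) (by omega),
                show i₀ + 1 + 1 = i₀ + 2 by omega]
            have ec4 : ∑ i ∈ Finset.Ico (i₀+1) (n-1), (3 - det2 (w (i-1)) (w (i+1)))
                = ∑ i ∈ Finset.Ico (i₀+2) n, (3 - det2 (v (i-1)) (v (i+1))) := by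
              have hcg : ∀ i ∈ Finset.Ico (i₀+1) (n-1),
                  (3 - det2 (w (i-1)) (w (i+1)))
                    = (fun j => 3 - det2 (v (j-1)) (v (j+1))) (i+1) := by
                intro i hi
                obtain ⟨hi1, hin⟩ := Finset.mem_Ico.mp hi
                simp only
                rw [hwge (i-1) (by omega), hwge (i+1) (by omega),
                  show i - 1 + 1 = i by omega, show i + 1 + 1 = i + 2 by omega,
                  show i + 1 - 1 = i by omega]
              rw [Finset.sum_congr rfl hcg, sum_Ico_shift
                (fun j => 3 - det2 (v (j-1)) (v (j+1))) (i₀+1) (n-1),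
                show i₀ + 1 + 1 = i₀ + 2 by omega, show n - 1 + 1 = n by omega]
            rw [ec1, ec2, ec3, ec4]
            ring
          rw [eL]
          rw [eK, show n - 1 - 1 = n - 2 by omega, hw1, hwn2] at key
          have hf2 : (3:ℤ) - det2 (v (i₀-1-1)) (v (i₀-1+1))
              = 3 - det2 (v (i₀-2)) (v i₀) := by
            rw [show i₀ - 1 - 1 = i₀ - 2 by omega, show i₀ - 1 + 1 = i₀ by omega]
          have hf3 : (3:ℤ) - det2 (v (i₀+1-1)) (v (i₀+1+1))
              = 3 - det2 (v i₀) (v (i₀+2)) := by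
            rw [show i₀ + 1 - 1 = i₀ by omega, show i₀ + 1 + 1 = i₀ + 2 by omega]
          linarith

lemma det2_neg_left (u w : ℤ × ℤ) : det2 (-u) w = - det2 u w := by simp [det2]; ring

lemma fan_b_eq {l : ℕ} (F : SmoothCompleteFan l) (i : ZMod (l+1)) :
    F.b i = det2 (F.ρ (i-1)) (F.ρ (i+1)) := by
  have hs : det2 (F.ρ (i-1)) (F.ρ i) = 1 := by
    have := F.smooth_ccw (i-1)
    rwa [sub_add_cancel] at this
  have h := congrArg (det2 (F.ρ (i-1))) (F.rel i)
  rw [det2_smul_right, hs, det2_add_right, det2_self, zero_add, mul_one] at h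
  exact h

lemma fan_no_interior {l : ℕ} (F : SmoothCompleteFan l) {i j : ZMod (l+1)} (hij : i ≠ j)
    {A C : ℤ} (hA : 1 ≤ A) (hC : 1 ≤ C)
    (h : F.ρ j = A • F.ρ i + C • F.ρ (i+1)) : False := by
  have hb := F.smooth_ccw i
  have hcr := cramer hb (F.ρ (j+1))
  set P := det2 (F.ρ (j+1)) (F.ρ (i+1)) with hP
  set Q := det2 (F.ρ i) (F.ρ (j+1)) with hQ
  set N : ℤ := |P| + |Q| + 1 with hN
  have haP := abs_nonneg P
  have haQ := abs_nonneg Q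
  have hsP := neg_abs_le P
  have hsQ := neg_abs_le Q
  have hN1 : 1 ≤ N := by omega
  have hN0 : (0:ℤ) ≤ N := by omega
  have hNA : 1 ≤ N * A + P := by nlinarith [mul_le_mul_of_nonneg_left hA hN0]
  have hNC : 1 ≤ N * C + Q := by nlinarith [mul_le_mul_of_nonneg_left hC hN0]
  have hw : N • F.ρ j + F.ρ (j+1) = (N*A+P) • F.ρ i + (N*C+Q) • F.ρ (i+1) := by
    rw [h, hcr]
    module
  refine F.proper j i hij.symm (N • F.ρ j + F.ρ (j+1)) ⟨⟨N.toNat, 1, ?_, one_pos, ?_⟩,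
    ⟨(N*A+P).toNat, (N*C+Q).toNat, ?_, ?_, ?_⟩⟩
  · omega
  · rw [Int.toNat_of_nonneg hN0]
    push_cast
    rw [one_smul]
  · omega
  · omega
  · rw [Int.toNat_of_nonneg (by omega), Int.toNat_of_nonneg (by omega)]
    exact hw

lemma detexp {e f : ℤ × ℤ} (h : det2 e f = 1) (u w : ℤ × ℤ) :
    det2 u w = det2 u f * det2 e w - det2 e u * det2 w f := by
  have h' : e.1 * f.2 - e.2 * f.1 = 1 := h
  show u.1 * w.2 - u.2 * w.1 = _
  simp only [det2]
  linear_combination (u.2 * w.1 - u.1 * w.2) * h'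

/-- With `b 0 < 0`, `l > 2`, and `α` the unique index with `1 < α < l` and `ρ α = -ρ 0`,
the quantity `γ = (∑_{i=1}^{α-1} (3 - b i)) - 3` satisfies `γ ≥ 0` and
`b 0 + b α - γ ≥ 0`. -/
theorem gamma_nonneg (l : ℕ) (hl : 2 < l) (F : SmoothCompleteFan l)
    (hb0 : F.b 0 < 0) (α : ℕ) (hα1 : 1 < α) (hαl : α < l)
    (hopp : F.ρ (α : ZMod (l + 1)) = - F.ρ 0)
    (γ : ℤ) (hγ : γ = (∑ i ∈ Finset.Ico 1 α, (3 - F.b ((i : ℕ) : ZMod (l + 1)))) - 3) :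
    0 ≤ γ ∧ 0 ≤ F.b 0 + F.b ((α : ℕ) : ZMod (l + 1)) - γ := by
  -- cast injectivity on indices
  have hcastinj : ∀ a b : ℕ, a < l+1 → b < l+1 →
      (a : ZMod (l+1)) = (b : ZMod (l+1)) → a = b := by
    intro a b ha hb hab
    have := congrArg ZMod.val hab
    rwa [ZMod.val_natCast_of_lt ha, ZMod.val_natCast_of_lt hb] at this
  -- smoothness with ℕ indices
  have hsm : ∀ k : ℕ, det2 (F.ρ (k : ZMod (l+1))) (F.ρ ((k+1 : ℕ) : ZMod (l+1))) = 1 := by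
    intro k
    have := F.smooth_ccw (k : ZMod (l+1))
    rwa [show ((k : ZMod (l+1)) + 1) = ((k+1 : ℕ) : ZMod (l+1)) by push_cast; ring] at this
  have h01 : det2 (F.ρ 0) (F.ρ 1) = 1 := by
    have := hsm 0
    norm_num at this
    exact this
  -- Y positivity on the upper chain
  have hYpos : ∀ k : ℕ, 1 ≤ k → k ≤ α - 1 →
      1 ≤ det2 (F.ρ 0) (F.ρ (k : ZMod (l+1))) := by
    have main : ∀ k : ℕ, 1 ≤ k → (k ≤ α - 1 →
        1 ≤ det2 (F.ρ 0) (F.ρ (k : ZMod (l+1)))) := by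
      refine Nat.le_induction ?_ ?_
      · intro _
        have h := hsm 0
        norm_num at h ⊢
        omega
      · intro k hk1 IH hk2
        have hYk := IH (by omega)
        by_contra hcon
        push_neg at hcon
        have hle : det2 (F.ρ 0) (F.ρ ((k+1 : ℕ) : ZMod (l+1))) ≤ 0 := by omega
        rcases eq_or_lt_of_le hle with heq | hlt
        · -- Y (k+1) = 0 : then ρ (k+1) = ± ρ 0, contradicting injectivity
          have hcr := cramer h01 (F.ρ ((k+1 : ℕ) : ZMod (l+1)))
          rw [heq] at hcr
          rw [zero_smul, add_zero] at hcr
          have hdet := hsm (k+1)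
          rw [hcr, det2_smul_left] at hdet
          rcases Int.isUnit_iff.mp (IsUnit.of_mul_eq_one _ hdet) with ht | ht
          · rw [ht, one_smul] at hcr
            have := hcastinj (k+1) 0 (by omega) (by omega)
              (by rw [Nat.cast_zero]; exact F.inj hcr)
            omega
          · rw [ht, neg_one_smul] at hcr
            rw [← hopp] at hcr
            have := hcastinj (k+1) α (by omega) (by omega) (F.inj hcr)
            omega
        · -- Y (k+1) ≤ -1 : ρ α is in the interior of cone k
          have hcr := cramer (hsm k) (F.ρ (α : ZMod (l+1)))
          rw [hopp, det2_neg_left, det2_neg_right] at hcr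
          rw [det2_swap (F.ρ ((k:ℕ) : ZMod (l+1))) (F.ρ 0)] at hcr
          rw [neg_neg, ← hopp] at hcr
          have hne : ((k:ℕ) : ZMod (l+1)) ≠ ((α:ℕ) : ZMod (l+1)) := fun hcc =>
            absurd (hcastinj k α (by omega) (by omega) hcc) (by omega)
          refine fan_no_interior F hne (A := -det2 (F.ρ 0) (F.ρ ((k+1 : ℕ) : ZMod (l+1))))
            (C := det2 (F.ρ 0) (F.ρ ((k:ℕ) : ZMod (l+1)))) (by omega) hYk ?_
          rw [show ((k : ZMod (l+1)) + 1) = ((k+1 : ℕ) : ZMod (l+1)) by push_cast; ring]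
          rw [neg_smul] at hcr ⊢
          exact hcr
    exact fun k h1 h2 => main k h1 h2
  -- Y (α+1) = -1
  have hYap1 : det2 (F.ρ 0) (F.ρ ((α+1 : ℕ) : ZMod (l+1))) = -1 := by
    have h := hsm α
    rw [hopp, det2_neg_left] at h
    omega
  -- Y negativity on the lower chain
  have hYneg : ∀ k : ℕ, α + 1 ≤ k → k ≤ l →
      det2 (F.ρ 0) (F.ρ (k : ZMod (l+1))) ≤ -1 := by
    have main : ∀ k : ℕ, α + 1 ≤ k → (k ≤ l →
        det2 (F.ρ 0) (F.ρ (k : ZMod (l+1))) ≤ -1) := by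
      refine Nat.le_induction ?_ ?_
      · intro _
        omega
      · intro k hk1 IH hk2
        have hYk := IH (by omega)
        by_contra hcon
        push_neg at hcon
        have hge : 0 ≤ det2 (F.ρ 0) (F.ρ ((k+1 : ℕ) : ZMod (l+1))) := by omega
        rcases eq_or_lt_of_le hge with heq | hlt
        · -- Y (k+1) = 0
          have hcr := cramer h01 (F.ρ ((k+1 : ℕ) : ZMod (l+1)))
          rw [← heq, zero_smul, add_zero] at hcr
          have hdet := hsm (k+1)
          rw [hcr, det2_smul_left] at hdet
          rcases Int.isUnit_iff.mp (IsUnit.of_mul_eq_one _ hdet) with ht | ht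
          · rw [ht, one_smul] at hcr
            have := hcastinj (k+1) 0 (by omega) (by omega)
              (by rw [Nat.cast_zero]; exact F.inj hcr)
            omega
          · rw [ht, neg_one_smul] at hcr
            rw [← hopp] at hcr
            have := hcastinj (k+1) α (by omega) (by omega) (F.inj hcr)
            omega
        · -- Y (k+1) ≥ 1 : ρ 0 is in the interior of cone k
          have hcr := cramer (hsm k) (F.ρ 0)
          rw [det2_swap (F.ρ ((k:ℕ) : ZMod (l+1))) (F.ρ 0)] at hcr
          have hne : ((k:ℕ) : ZMod (l+1)) ≠ (0 : ZMod (l+1)) := fun hcc =>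
            absurd (hcastinj k 0 (by omega) (by omega) (by rw [Nat.cast_zero]; exact hcc))
              (by omega)
          refine fan_no_interior F hne (A := det2 (F.ρ 0) (F.ρ ((k+1 : ℕ) : ZMod (l+1))))
            (C := -det2 (F.ρ 0) (F.ρ ((k:ℕ) : ZMod (l+1)))) (by omega) (by omega) ?_
          rw [show ((k : ZMod (l+1)) + 1) = ((k+1 : ℕ) : ZMod (l+1)) by push_cast; ring]
          rw [neg_smul] at hcr ⊢
          exact hcr
    exact fun k h1 h2 => main k h1 h2
  -- X nonpositivity on the upper chain
  have hXneg : ∀ k : ℕ, 1 ≤ k → k ≤ α - 1 →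
      det2 (F.ρ (k : ZMod (l+1))) (F.ρ 1) ≤ 0 := by
    have main : ∀ k : ℕ, 1 ≤ k → (k ≤ α - 1 →
        det2 (F.ρ (k : ZMod (l+1))) (F.ρ 1) ≤ 0) := by
      refine Nat.le_induction ?_ ?_
      · intro _
        rw [show ((1:ℕ) : ZMod (l+1)) = 1 by norm_num, det2_self]
      · intro k hk1 IH hk2
        have hXk := IH (by omega)
        have hYk := hYpos k (by omega) (by omega)
        have hYk1 := hYpos (k+1) (by omega) (by omega)
        have hd := detexp h01 (F.ρ ((k:ℕ) : ZMod (l+1))) (F.ρ ((k+1 : ℕ) : ZMod (l+1)))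
        rw [hsm k] at hd
        nlinarith [mul_nonneg (by linarith : (0:ℤ) ≤ -det2 (F.ρ ((k:ℕ) : ZMod (l+1))) (F.ρ 1))
            (by linarith : (0:ℤ) ≤ det2 (F.ρ 0) (F.ρ ((k+1 : ℕ) : ZMod (l+1))))]
    exact fun k h1 h2 => main k h1 h2
  -- E nonnegativity on the lower chain
  have hE : ∀ k : ℕ, α + 1 ≤ k → k ≤ l →
      0 ≤ det2 (F.ρ ((α+1 : ℕ) : ZMod (l+1))) (F.ρ (k : ZMod (l+1))) := by
    have main : ∀ k : ℕ, α + 1 ≤ k → (k ≤ l →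
        0 ≤ det2 (F.ρ ((α+1 : ℕ) : ZMod (l+1))) (F.ρ (k : ZMod (l+1)))) := by
      refine Nat.le_induction ?_ ?_
      · intro _
        rw [det2_self]
      · intro k hk1 IH hk2
        have hEk := IH (by omega)
        have hYk := hYneg k (by omega) (by omega)
        have hYk1 := hYneg (k+1) (by omega) (by omega)
        have hd := detexp h01 (F.ρ ((k:ℕ) : ZMod (l+1))) (F.ρ ((k+1 : ℕ) : ZMod (l+1)))
        rw [hsm k] at hd
        have e1 := detexp h01 (F.ρ ((α+1 : ℕ) : ZMod (l+1))) (F.ρ ((k:ℕ) : ZMod (l+1)))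
        have e2 := detexp h01 (F.ρ ((α+1 : ℕ) : ZMod (l+1))) (F.ρ ((k+1 : ℕ) : ZMod (l+1)))
        rw [hYap1] at e1 e2
        by_contra hcon
        push_neg at hcon
        nlinarith [mul_nonneg (by linarith : (0:ℤ) ≤ -det2 (F.ρ 0) (F.ρ ((k+1:ℕ) : ZMod (l+1))))
            hEk,
          mul_pos (by linarith : (0:ℤ) < -det2 (F.ρ 0) (F.ρ ((k:ℕ) : ZMod (l+1))))
            (by linarith :
              (0:ℤ) < -det2 (F.ρ ((α+1 : ℕ) : ZMod (l+1))) (F.ρ ((k+1:ℕ) : ZMod (l+1))))]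
    exact fun k h1 h2 => main k h1 h2
  -- b with ℕ indices
  have hbd : ∀ i : ℕ, 1 ≤ i → F.b (i : ZMod (l+1)) =
      det2 (F.ρ ((i-1 : ℕ) : ZMod (l+1))) (F.ρ ((i+1 : ℕ) : ZMod (l+1))) := by
    intro i hi
    rw [fan_b_eq F (i : ZMod (l+1)),
      show ((i-1 : ℕ) : ZMod (l+1)) = (i : ZMod (l+1)) - 1 by
        rw [Nat.cast_sub hi, Nat.cast_one],
      show ((i+1 : ℕ) : ZMod (l+1)) = (i : ZMod (l+1)) + 1 by push_cast; ring]
  -- the chain-sum identity applied to the upper chain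
  have hchain : ∑ i ∈ Finset.Ico 1 α,
        (3 - det2 (F.ρ ((i-1 : ℕ) : ZMod (l+1))) (F.ρ ((i+1 : ℕ) : ZMod (l+1))))
      = 3 + det2 (F.ρ ((1:ℕ) : ZMod (l+1))) (F.ρ ((α-1 : ℕ) : ZMod (l+1))) :=
    chain_sum α (by omega) (fun j => F.ρ (j : ZMod (l+1)))
      (fun i _ => hsm i)
      (fun i h0i hiα => by
        have h := hYpos i (by omega) (by omega)
        show (1:ℤ) ≤ det2 (F.ρ ((0:ℕ) : ZMod (l+1))) (F.ρ (i : ZMod (l+1)))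
        rwa [Nat.cast_zero]
        )
      (by
        show F.ρ ((α:ℕ) : ZMod (l+1)) = - F.ρ ((0:ℕ) : ZMod (l+1))
        rwa [Nat.cast_zero])
  have hsumeq : ∑ i ∈ Finset.Ico 1 α, (3 - F.b ((i : ℕ) : ZMod (l+1)))
      = 3 + det2 (F.ρ ((1:ℕ) : ZMod (l+1))) (F.ρ ((α-1 : ℕ) : ZMod (l+1))) := by
    rw [← hchain]
    exact Finset.sum_congr rfl fun i hi => by
      rw [hbd i (Finset.mem_Ico.mp hi).1]
  have hγval : γ = det2 (F.ρ ((1:ℕ) : ZMod (l+1))) (F.ρ ((α-1 : ℕ) : ZMod (l+1))) := by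
    rw [hγ, hsumeq]; ring
  rw [Nat.cast_one] at hγval
  -- b 0 and b α in determinant form
  have hm1 : ((l:ℕ) : ZMod (l+1)) = -1 := by
    have h : ((l:ℕ) : ZMod (l+1)) + 1 = 0 := by
      have h2 := ZMod.natCast_self (l+1)
      push_cast at h2
      exact h2
    exact eq_neg_of_add_eq_zero_left h
  have hb0v : F.b 0 = det2 (F.ρ ((l:ℕ) : ZMod (l+1))) (F.ρ 1) := by
    rw [fan_b_eq F 0, zero_sub, zero_add, hm1]
  have hbαv : F.b ((α:ℕ) : ZMod (l+1)) =
      det2 (F.ρ ((α-1 : ℕ) : ZMod (l+1))) (F.ρ ((α+1 : ℕ) : ZMod (l+1))) := hbd α (by omega)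
  have hYam1 : det2 (F.ρ 0) (F.ρ ((α-1 : ℕ) : ZMod (l+1))) = 1 := by
    have h := hsm (α-1)
    rw [show α - 1 + 1 = α by omega, hopp, det2_neg_right] at h
    linarith [det2_swap (F.ρ 0) (F.ρ ((α-1 : ℕ) : ZMod (l+1)))]
  have hYl : det2 (F.ρ 0) (F.ρ ((l:ℕ) : ZMod (l+1))) = -1 := by
    have h := hsm l
    rw [show ((l+1 : ℕ) : ZMod (l+1)) = 0 from ZMod.natCast_self (l+1)] at h
    linarith [det2_swap (F.ρ 0) (F.ρ ((l:ℕ) : ZMod (l+1)))]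
  have hEl := hE l (by omega) (le_refl l)
  have e1 := detexp h01 (F.ρ ((α-1 : ℕ) : ZMod (l+1))) (F.ρ ((α+1 : ℕ) : ZMod (l+1)))
  have e2 := detexp h01 (F.ρ ((α+1 : ℕ) : ZMod (l+1))) (F.ρ ((l:ℕ) : ZMod (l+1)))
  rw [hYap1, hYam1] at e1
  rw [hYl, hYap1] at e2
  have hXam1 := hXneg (α-1) (by omega) (le_refl _)
  have hswγ := det2_swap (F.ρ 1) (F.ρ ((α-1 : ℕ) : ZMod (l+1)))
  constructor
  · linarith
  · rw [hb0v, hbαv, hγval]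
    linarith
end

section
/- There do not exist integers $n \geq 1$, $u_0^l, v_0^l, u_\infty^l, v_\infty^l, u_0^r, v_0^r, u_\infty^r, v_\infty^r$ with $v_0^l, v_\infty^l, v_0^r, v_\infty^r \geq 2$ satisfying all of: (1) $-u_0^l v_\infty^l - u_\infty^l v_0^l = 1$; (2) $u_0^r v_\infty^r + u_\infty^r v_0^r + v_0^r v_\infty^r n = 1$; (3) $u_0^l v_0^r \leq u_0^r v_0^l$; (4) $u_\infty^l v_\infty^r \leq u_\infty^r v_\infty^l$. -/
/-- The key arithmetic impossibility in the proof that every smooth rational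
`ℂ*`-surface homogeneously degenerates to a toric surface: there are no integers
`n ≥ 1` and `u`'s and `v`'s with all `v`'s at least `2` satisfying the two smoothness
equations and the two ordering inequalities. -/
theorem no_such_integers :
    ¬ ∃ (n u0l v0l uil vil u0r v0r uir vir : ℤ),
      1 ≤ n ∧ 2 ≤ v0l ∧ 2 ≤ vil ∧ 2 ≤ v0r ∧ 2 ≤ vir ∧
      (-u0l * vil - uil * v0l = 1) ∧
      (u0r * vir + uir * v0r + v0r * vir * n = 1) ∧
      u0l * v0r ≤ u0r * v0l ∧
      uil * vir ≤ uir * vil := by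
  rintro ⟨n, u0l, v0l, uil, vil, u0r, v0r, uir, vir, hn, h1, h2, h3, h4, e1, e2, i1, i2⟩
  have p1 : (0:ℤ) ≤ vil * vir := by positivity
  have p2 : (0:ℤ) ≤ v0l * v0r := by positivity
  have k1 := mul_le_mul_of_nonneg_right i1 p1
  have k2 := mul_le_mul_of_nonneg_right i2 p2
  have e1' : (u0l * vil + uil * v0l) * (v0r * vir) = -(v0r * vir) := by
    linear_combination (-(v0r * vir)) * e1
  have e2' : (u0r * vir + uir * v0r) * (v0l * vil) = (1 - v0r * vir * n) * (v0l * vil) := by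
    linear_combination (v0l * vil) * e2
  have key : -(v0r * vir) ≤ (1 - v0r * vir * n) * (v0l * vil) := by nlinarith [k1, k2, e1', e2']
  have hA : (4:ℤ) ≤ v0l * vil := by nlinarith
  have hB : (4:ℤ) ≤ v0r * vir := by nlinarith
  nlinarith [key, hA, hB, mul_le_mul hA hB (by norm_num) (by linarith),
    mul_le_mul_of_nonneg_left hn (show (0:ℤ) ≤ v0r * vir * (v0l * vil) by nlinarith)]
end

section
/- On the Hirzebruch surface $\mathcal{F}_r$ (Picard lattice with basis $P,Q$, $P^2=0$, $P\cdot Q=1$, $Q^2=r$, $-K=2Q+(2-r)P$), every toric system $(A_1,A_2,A_3,A_4)$ is, up to cyclic permutation and reflection of the indices, equal to $\mathcal{A}_{r,i} = (P, iP+Q, P, -(r+i)P+Q)$ for some $i\in\mathbb{Z}$, or (when $r$ is even) to $\tilde{\mathcal{A}}_{r,i} = (-\frac{r}{2}P+Q, P+i(-\frac{r}{2}P+Q), -\frac{r}{2}P+Q, P-i(-\frac{r}{2}P+Q))$ for some $i\in\mathbb{Z}$. -/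
/-- The Picard lattice of the Hirzebruch surface `𝔽_r` is `ℤ²`, where `(p, q)`
represents `pP + qQ`; the intersection form is determined by `P² = 0`, `P·Q = 1`,
`Q² = r`. -/
def hirzForm (r : ℤ) (v w : ℤ × ℤ) : ℤ := v.1 * w.2 + v.2 * w.1 + r * v.2 * w.2

/-- The anticanonical class `-K = (2-r)P + 2Q` of `𝔽_r`. -/
def hirzNegK (r : ℤ) : ℤ × ℤ := (2 - r, 2)

/-- A toric system on `𝔽_r`: a 4-tuple of divisor classes with cyclically adjacent
intersection numbers `1`, non-adjacent intersection numbers `0`, summing to `-K`. -/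
def IsToricSystemF (r : ℤ) (A : Fin 4 → ℤ × ℤ) : Prop :=
  hirzForm r (A 0) (A 1) = 1 ∧ hirzForm r (A 1) (A 2) = 1 ∧
  hirzForm r (A 2) (A 3) = 1 ∧ hirzForm r (A 3) (A 0) = 1 ∧
  hirzForm r (A 0) (A 2) = 0 ∧ hirzForm r (A 1) (A 3) = 0 ∧
  A 0 + A 1 + A 2 + A 3 = hirzNegK r

/-- The toric system `𝒜_{r,i} = (P, iP+Q, P, -(r+i)P+Q)` on `𝔽_r`. -/
def ATS (r i : ℤ) : Fin 4 → ℤ × ℤ := ![(1, 0), (i, 1), (1, 0), (-(r + i), 1)]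

/-- The toric system `Ã_{r,i}` on `𝔽_r` for even `r = 2m`. -/
def tATS (m i : ℤ) : Fin 4 → ℤ × ℤ :=
  ![(-m, 1), (1, 0) + i • ((-m : ℤ), (1 : ℤ)), (-m, 1), (1, 0) - i • ((-m : ℤ), (1 : ℤ))]

/-- Two 4-tuples agree up to cyclic permutation or reflection of the indices
(addition and subtraction on `Fin 4` being cyclic). -/
def SameUpToDihedral (A B : Fin 4 → ℤ × ℤ) : Prop :=
  ∃ k : Fin 4, (∀ j, A j = B (j + k)) ∨ (∀ j, A j = B (k - j))

/-- Every toric system on the Hirzebruch surface `𝔽_r` is, up to cyclic permutation and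
reflection, of the form `𝒜_{r,i}`, or (when `r = 2m` is even) of the form `Ã_{r,i}`. -/
theorem toricSystemF_classification (r : ℤ) (A : Fin 4 → ℤ × ℤ)
    (hA : IsToricSystemF r A) :
    (∃ i : ℤ, SameUpToDihedral A (ATS r i)) ∨
    (∃ m i : ℤ, r = 2 * m ∧ SameUpToDihedral A (tATS m i)) := by
  obtain ⟨e01, e12, e23, e30, e02, e13, esum⟩ := hA
  obtain ⟨a0, b0, h0⟩ : ∃ x y, A 0 = (x, y) := ⟨_, _, rfl⟩
  obtain ⟨a1, b1, h1⟩ : ∃ x y, A 1 = (x, y) := ⟨_, _, rfl⟩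
  obtain ⟨a2, b2, h2⟩ : ∃ x y, A 2 = (x, y) := ⟨_, _, rfl⟩
  obtain ⟨a3, b3, h3⟩ : ∃ x y, A 3 = (x, y) := ⟨_, _, rfl⟩
  simp only [h0, h1, h2, h3] at e01 e12 e23 e30 e02 e13 esum
  simp only [hirzForm] at e01 e12 e23 e30 e02 e13
  rw [Prod.ext_iff] at esum
  obtain ⟨s1, s2⟩ := esum
  simp only [hirzNegK, Prod.fst_add, Prod.snd_add] at s1 s2
  -- dichotomies
  have d0 : b0 = 1 ∨ 2*a0 + r*b0 = 2 := by
    have h : (b0 - 1) * (2*a0 + r*b0 - 2) = 0 := by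
      linear_combination -e01 - e02 - e30 + b0*s1 + (a0 + r*b0)*s2
    rcases mul_eq_zero.1 h with h | h
    · exact Or.inl (by omega)
    · exact Or.inr (by linarith)
  have d1 : b1 = 1 ∨ 2*a1 + r*b1 = 2 := by
    have h : (b1 - 1) * (2*a1 + r*b1 - 2) = 0 := by
      linear_combination -e01 - e12 - e13 + b1*s1 + (a1 + r*b1)*s2
    rcases mul_eq_zero.1 h with h | h
    · exact Or.inl (by omega)
    · exact Or.inr (by linarith)
  have d2 : b2 = 1 ∨ 2*a2 + r*b2 = 2 := by
    have h : (b2 - 1) * (2*a2 + r*b2 - 2) = 0 := by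
      linear_combination -e12 - e23 - e02 + b2*s1 + (a2 + r*b2)*s2
    rcases mul_eq_zero.1 h with h | h
    · exact Or.inl (by omega)
    · exact Or.inr (by linarith)
  have d3 : b3 = 1 ∨ 2*a3 + r*b3 = 2 := by
    have h : (b3 - 1) * (2*a3 + r*b3 - 2) = 0 := by
      linear_combination -e23 - e30 - e13 + b3*s1 + (a3 + r*b3)*s2
    rcases mul_eq_zero.1 h with h | h
    · exact Or.inl (by omega)
    · exact Or.inr (by linarith)
  -- key disjunction
  have key : (2*a0 + r*b0 = 2 ∧ 2*a2 + r*b2 = 2) ∨ (2*a1 + r*b1 = 2 ∧ 2*a3 + r*b3 = 2) := by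
    rcases d0 with p0 | q0
    · rcases d2 with p2 | q2
      · -- b0 = 1, b2 = 1
        subst p0; subst p2
        right
        rcases d1 with p1 | q1
        · subst p1
          rcases d3 with p3 | q3
          · omega
          · exact ⟨by linear_combination e01 + e12 - e02, q3⟩
        · have hb3 : b3 = -b1 := by omega
          subst hb3
          have h : b1 * (2*a3 - r*b1 - 2) = 0 := by linear_combination 2*e13 + b1*q1
          rcases mul_eq_zero.1 h with hb10 | hq3'
          · subst hb10
            exact ⟨q1, by linear_combination 2*e23⟩
          · exact ⟨q1, by linear_combination hq3'⟩
      · -- b0 = 1, q2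
        subst p0
        have hkey2 : b2*(2*a0 + r) = -2 := by linear_combination 2*e02 - q2
        rcases d1 with p1 | q1
        · subst p1
          rcases d3 with p3 | q3
          · have hb2 : b2 = -1 := by omega
            subst hb2
            exact Or.inl ⟨by linear_combination -hkey2, q2⟩
          · have hb3 : b3 = -b2 := by omega
            subst hb3
            have hz : b2*(2*a1 + r) = 0 := by linear_combination 2*e12 - q2
            exact absurd (show (0:ℤ) = 2 by linear_combination -2*e13 + q3 - hz) (by norm_num)
        · rcases d3 with p3 | q3
          · subst p3
            have hb1 : b1 = -b2 := by omega
            subst hb1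
            have hz : (-b2)*(2*a0 + r) = 0 := by linear_combination 2*e01 - q1
            exact absurd (show (0:ℤ) = -2 by linear_combination hz + hkey2) (by norm_num)
          · exact Or.inr ⟨q1, q3⟩
    · rcases d2 with p2 | q2
      · -- q0, b2 = 1
        subst p2
        have hkey2 : b0*(2*a2 + r) = -2 := by linear_combination 2*e02 - q0
        rcases d1 with p1 | q1
        · subst p1
          rcases d3 with p3 | q3
          · have hb0 : b0 = -1 := by omega
            subst hb0
            exact Or.inl ⟨q0, by linear_combination -hkey2⟩
          · have hb3 : b3 = -b0 := by omega
            subst hb3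
            have hz : b0*(2*a1 + r) = 0 := by linear_combination 2*e01 - q0
            exact absurd (show (0:ℤ) = 2 by linear_combination -2*e13 + q3 - hz) (by norm_num)
        · rcases d3 with p3 | q3
          · subst p3
            have hb1 : b1 = -b0 := by omega
            subst hb1
            exact absurd (show (0:ℤ) = 2 by linear_combination 2*e01 - b0*q1 + b0*q0) (by norm_num)
          · exact Or.inr ⟨q1, q3⟩
      · exact Or.inl ⟨q0, q2⟩
  clear d0 d1 d2 d3
  rcases key with ⟨hq0, hq2⟩ | ⟨hq1, hq3⟩
  · -- branch A
    have hb2 : b2 = -b0 := by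
      have h : 2*b2 + 2*b0 = 0 := by linear_combination 2*e02 - b2*hq0 - b0*hq2
      omega
    subst hb2
    have hb1 : b1 = 1 := by
      have h : 4*b1 = 4 := by linear_combination 2*e01 + 2*e12 - b1*hq0 - b1*hq2
      omega
    subst hb1
    have hb3 : b3 = 1 := by omega
    subst hb3
    have hx1 : b0 * (2*a1 + r) = 0 := by linear_combination 2*e01 - hq0
    have hx3 : b0 * (2*a3 + r) = 0 := by linear_combination 2*e30 - hq0
    by_cases hb0 : b0 = 0
    · subst hb0
      have ha0 : a0 = 1 := by linarith [hq0]
      have ha2 : a2 = 1 := by linarith [hq2]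
      have ha3 : a3 = -r - a1 := by linear_combination e13
      subst ha0; subst ha2; subst ha3
      refine Or.inl ⟨a1, 0, Or.inl ?_⟩
      intro j
      fin_cases j <;> simp [ATS, h0, h1, h2, h3, Prod.ext_iff] <;> ring
    · have hq1' : 2*a1 + r = 0 := by rcases mul_eq_zero.1 hx1 with h | h; exact absurd h hb0; exact h
      have hq3' : 2*a3 + r = 0 := by rcases mul_eq_zero.1 hx3 with h | h; exact absurd h hb0; exact h
      have ha0 : a0 = 1 + b0 * a1 := by nlinarith [hq0, hq1']
      have ha2 : a2 = 1 - b0 * a1 := by nlinarith [hq2, hq1']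
      have ha3 : a3 = a1 := by omega
      refine Or.inr ⟨-a1, b0, by omega, 1, Or.inl ?_⟩
      intro j
      fin_cases j <;> simp [tATS, h0, h1, h2, h3, Prod.ext_iff] <;> (try constructor) <;> linarith
  · -- branch B
    have hb3 : b3 = -b1 := by
      have h : 2*b3 + 2*b1 = 0 := by linear_combination 2*e13 - b3*hq1 - b1*hq3
      omega
    subst hb3
    have hb0 : b0 = 1 := by
      have h : 4*b0 = 4 := by linear_combination 2*e30 + 2*e01 - b0*hq3 - b0*hq1
      omega
    subst hb0
    have hb2 : b2 = 1 := by omega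
    subst hb2
    have hx0 : b1 * (2*a0 + r) = 0 := by linear_combination 2*e01 - hq1
    have hx2 : b1 * (2*a2 + r) = 0 := by linear_combination 2*e12 - hq1
    by_cases hb1 : b1 = 0
    · subst hb1
      have ha1 : a1 = 1 := by linarith [hq1]
      have ha3 : a3 = 1 := by linarith [hq3]
      have ha2 : a2 = -r - a0 := by linear_combination e02
      subst ha1; subst ha3; subst ha2
      refine Or.inl ⟨a0, 1, Or.inl ?_⟩
      intro j
      fin_cases j <;> simp [ATS, h0, h1, h2, h3, Prod.ext_iff] <;> ring
    · have hq0' : 2*a0 + r = 0 := by rcases mul_eq_zero.1 hx0 with h | h; exact absurd h hb1; exact h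
      have hq2' : 2*a2 + r = 0 := by rcases mul_eq_zero.1 hx2 with h | h; exact absurd h hb1; exact h
      have ha1 : a1 = 1 + b1 * a0 := by nlinarith [hq1, hq0']
      have ha3 : a3 = 1 - b1 * a0 := by nlinarith [hq3, hq0']
      have ha2 : a2 = a0 := by omega
      refine Or.inr ⟨-a0, b1, by omega, 0, Or.inl ?_⟩
      intro j
      fin_cases j <;> simp [tATS, h0, h1, h2, h3, Prod.ext_iff] <;> (try constructor) <;> linarith
end

section
/- Let $X$ be a rational surface and $\phi: \tilde{X} \to X$ a blowup at one point with exceptional divisor $R$, so $\mathrm{Pic}(\tilde{X}) = \phi^*\mathrm{Pic}(X) \oplus \mathbb{Z}R$ with $R^2 = -1$, $R \cdot \phi^*D = 0$ for all $D$, and $K_{\tilde{X}} = \phi^* K_X + R$. If $\mathcal{A} = (A_1,\ldots,A_n)$ is a toric system on $X$, then for each $1 \leq i \leq n$, the augmentation $\mathrm{Aug}_i\mathcal{A} = (A_1,\ldots,A_{i-1}, A_i - R, R, A_{i+1} - R, A_{i+2},\ldots,A_n)$ (classes pulled back via $\phi^*$, indices cyclic) is a toric system on $\tilde{X}$. -/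
private lemma mod_eq_mod_iff {m a b : ℕ} (ha : a < 2 * m) (hb : b < 2 * m) :
    a % m = b % m ↔ (a = b ∨ a + m = b ∨ b + m = a) := by
  have sub : ∀ c : ℕ, m ≤ c → c < 2 * m → c % m = c - m := fun c h1 h2 => by
    rw [Nat.mod_eq_sub_mod h1, Nat.mod_eq_of_lt (by omega)]
  rcases Nat.lt_or_ge a m with h1 | h1 <;> rcases Nat.lt_or_ge b m with h2 | h2
  · rw [Nat.mod_eq_of_lt h1, Nat.mod_eq_of_lt h2]; omega
  · rw [Nat.mod_eq_of_lt h1, sub b h2 hb]; omega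
  · rw [sub a h1 ha, Nat.mod_eq_of_lt h2]; omega
  · rw [sub a h1 ha, sub b h2 hb]; omega

private lemma cast_eq_cast_iff {m a b : ℕ} (ha : a < 2 * m) (hb : b < 2 * m) :
    ((a : ZMod m) = (b : ZMod m)) ↔ (a = b ∨ a + m = b ∨ b + m = a) := by
  rw [ZMod.natCast_eq_natCast_iff', mod_eq_mod_iff ha hb]

private lemma zsum_Ico (m : ℕ) [NeZero m] {M : Type*} [AddCommMonoid M] (f : ZMod m → M) :
    ∑ j ∈ Finset.Ico 1 (m + 1), f (j : ZMod m) = ∑ r : ZMod m, f r := by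
  have hm : 0 < m := Nat.pos_of_ne_zero (NeZero.ne m)
  refine Finset.sum_nbij' (fun j => ((j : ℕ) : ZMod m))
    (fun r => if r.val = 0 then m else r.val) ?_ ?_ ?_ ?_ ?_
  · intro a _; exact Finset.mem_univ _
  · intro r _
    simp only [Finset.mem_Ico]
    split_ifs with h
    · omega
    · have := ZMod.val_lt r; omega
  · intro a ha
    simp only [Finset.mem_Ico] at ha
    rw [ZMod.val_natCast]
    rcases Nat.lt_or_ge a m with h | h
    · rw [Nat.mod_eq_of_lt h]
      rw [if_neg (by omega)]
    · have : a = m := by omega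
      subst this
      rw [Nat.mod_self, if_pos rfl]
  · intro r _
    split_ifs with h
    · rw [ZMod.natCast_self]; exact ((ZMod.val_eq_zero r).mp h).symm
    · exact ZMod.natCast_rightInverse r
  · intro a _; rfl


/-- A toric system of length `n` on a surface with Picard group `V` (a free abelian
group), intersection form `form` and anticanonical class `negK`: cyclically adjacent
classes meet in `1`, non-adjacent classes meet in `0`, and the classes sum to `-K`. -/
def IsToricSystem {V : Type*} [AddCommGroup V] (form : V → V → ℤ) (negK : V)
    (n : ℕ) [NeZero n] (A : ZMod n → V) : Prop :=
  (∀ i : ZMod n, form (A i) (A (i + 1)) = 1) ∧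
  (∀ i j : ZMod n, j ≠ i - 1 → j ≠ i → j ≠ i + 1 → form (A i) (A j) = 0) ∧
  (∑ i : ZMod n, A i) = negK

/-- Augmentation of a toric system is a toric system.  Here `Pic X̃ = Pic X ⊕ ℤR` is
modeled as `V × ℤ` with form `(v,a)·(w,b) = v·w - ab` (so `R² = -1`, `R ⟂ φ*Pic X`) and
anticanonical class `(-K, -1)` (i.e. `K_X̃ = φ*K_X + R`).  Given a toric system
`A = (A_1, …, A_n)` on `X` and a position `1 ≤ i ≤ n`, any `(n+1)`-tuple `A'` equal to
`(A_1, …, A_{i-1}, A_i - R, R, A_{i+1} - R, A_{i+2}, …, A_n)` (indices cyclic) is a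
toric system on `X̃`. -/
theorem aug_isToricSystem {V : Type*} [AddCommGroup V] (form : V → V → ℤ)
    (hsymm : ∀ v w, form v w = form w v)
    (hadd : ∀ u v w, form (u + v) w = form u w + form v w)
    (negK : V) (n : ℕ) [NeZero n] (hn : 3 ≤ n)
    (A : ZMod n → V) (hA : IsToricSystem form negK n A)
    (i : ℕ) (hi1 : 1 ≤ i) (hin : i ≤ n)
    (A' : ZMod (n + 1) → V × ℤ)
    (h1 : ∀ j : ℕ, 1 ≤ j → j < i → A' (j : ZMod (n + 1)) = (A (j : ZMod n), 0))
    (h2 : A' (i : ZMod (n + 1)) = (A (i : ZMod n), -1))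
    (h3 : A' ((i + 1 : ℕ) : ZMod (n + 1)) = (0, 1))
    (h4 : A' ((i + 2 : ℕ) : ZMod (n + 1)) = (A ((i + 1 : ℕ) : ZMod n), -1))
    (h5 : ∀ j : ℕ, i + 2 < j → j ≤ n + 1 →
      A' (j : ZMod (n + 1)) = (A ((j - 1 : ℕ) : ZMod n), 0)) :
    IsToricSystem (fun x y => form x.1 y.1 - x.2 * y.2) (negK, -1) (n + 1) A' := by
  obtain ⟨hA1, hA2, hAsum⟩ := hA
  -- the intersection form kills 0
  have form0 : ∀ v : V, form 0 v = 0 := by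
    intro v
    have h := hadd 0 0 v
    rw [add_zero] at h
    omega
  have form0' : ∀ v : V, form v 0 = 0 := fun v => by rw [hsymm]; exact form0 v
  -- dispose of the degenerate case i = n, where the hypotheses are contradictory
  rcases Nat.eq_or_lt_of_le hin with hieq | hilt
  · exfalso
    have e1 : A' ((1 : ℕ) : ZMod (n + 1)) = (A ((1 : ℕ) : ZMod n), 0) :=
      h1 1 le_rfl (by omega)
    have ecast : ((i + 2 : ℕ) : ZMod (n + 1)) = ((1 : ℕ) : ZMod (n + 1)) :=
      (cast_eq_cast_iff (by omega) (by omega)).mpr (by omega)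
    have e2 := h4
    rw [ecast, e1] at e2
    have := congrArg Prod.snd e2
    simp at this
  -- now 1 ≤ i < n
  -- adjacency of `A` in natural-number form
  have hAadj' : ∀ a b : ℕ, (a + 1) % n = b % n → form (A (a : ZMod n)) (A (b : ZMod n)) = 1 := by
    intro a b hab
    have hcast : ((a + 1 : ℕ) : ZMod n) = (b : ZMod n) := by
      rw [ZMod.natCast_eq_natCast_iff']; exact hab
    have := hA1 (a : ZMod n)
    rwa [show ((a : ZMod n) + 1) = ((a + 1 : ℕ) : ZMod n) by push_cast; ring, hcast] at this
  -- orthogonality of `A` in natural-number form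
  have horth : ∀ a b : ℕ, ¬((b + 1) % n = a % n) → ¬(b % n = a % n) →
      ¬(b % n = (a + 1) % n) → form (A (a : ZMod n)) (A (b : ZMod n)) = 0 := by
    intro a b q1 q2 q3
    apply hA2 (a : ZMod n) (b : ZMod n)
    · intro h
      apply q1
      have hc : ((b + 1 : ℕ) : ZMod n) = ((a : ℕ) : ZMod n) := by push_cast; rw [h]; ring
      rwa [ZMod.natCast_eq_natCast_iff'] at hc
    · intro h
      apply q2
      rwa [ZMod.natCast_eq_natCast_iff'] at h
    · intro h
      apply q3
      have hc : ((b : ℕ) : ZMod n) = ((a + 1 : ℕ) : ZMod n) := by push_cast; rw [h]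
      rwa [ZMod.natCast_eq_natCast_iff'] at hc
  -- every element of `ZMod (n+1)` is the cast of a natural number in [1, n+1]
  have rep : ∀ r : ZMod (n + 1), ∃ j : ℕ, 1 ≤ j ∧ j ≤ n + 1 ∧ r = (j : ZMod (n + 1)) := by
    intro r
    rcases Nat.eq_zero_or_pos r.val with h | h
    · refine ⟨n + 1, by omega, le_rfl, ?_⟩
      rw [ZMod.natCast_self]
      exact (ZMod.val_eq_zero r).mp h
    · exact ⟨r.val, h, by have := ZMod.val_lt r; omega,
        (ZMod.natCast_rightInverse r).symm⟩
  -- uniform description of the non-exceptional entries of A'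
  have desc : ∀ j : ℕ, 1 ≤ j → j ≤ n + 1 → j ≠ i + 1 →
      A' (j : ZMod (n + 1)) =
        (A ((if j ≤ i then j else j - 1 : ℕ) : ZMod n),
          if j = i ∨ j = i + 2 then -1 else 0) := by
    intro j hj1 hj2 hj3
    rcases Nat.lt_trichotomy j i with hj | hj | hj
    · rw [h1 j hj1 hj, if_pos (by omega), if_neg (by omega)]
    · subst hj
      rw [h2, if_pos le_rfl, if_pos (Or.inl rfl)]
    · rcases Nat.eq_or_lt_of_le (show i + 2 ≤ j by omega) with hj' | hj'
      · rw [← hj', h4, if_neg (by omega), if_pos (Or.inr rfl)]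
        norm_num
      · rw [h5 j hj' hj2, if_neg (by omega), if_neg (by omega)]
  refine ⟨?_, ?_, ?_⟩
  · -- adjacency
    intro r
    obtain ⟨j, hj1, hj2, rfl⟩ := rep r
    obtain ⟨j', hj'cases⟩ : ∃ j' : ℕ, (j' = j + 1 ∧ j ≤ n) ∨ (j = n + 1 ∧ j' = 1) := by
      by_cases h : j = n + 1
      · exact ⟨1, Or.inr ⟨h, rfl⟩⟩
      · exact ⟨j + 1, Or.inl ⟨rfl, by omega⟩⟩
    have hj'1 : 1 ≤ j' := by omega
    have hj'2 : j' ≤ n + 1 := by omega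
    have hcast : ((j : ZMod (n + 1)) + 1) = ((j' : ℕ) : ZMod (n + 1)) := by
      have h1c : ((j : ZMod (n + 1)) + 1) = ((j + 1 : ℕ) : ZMod (n + 1)) := by
        push_cast; ring
      rw [h1c, cast_eq_cast_iff (by omega) (by omega)]
      omega
    dsimp only
    rw [hcast]
    by_cases hji : j = i + 1
    · have hj'eq : j' = i + 2 := by omega
      rw [hji, hj'eq, h3, h4]
      dsimp only
      rw [form0]
      norm_num
    · by_cases hji' : j' = i + 1
      · have hjeq : j = i := by omega
        rw [hjeq, hji', h2, h3]
        dsimp only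
        rw [form0']
        norm_num
      · rw [desc j hj1 hj2 hji, desc j' hj'1 hj'2 hji']
        dsimp only
        rw [show ((if j = i ∨ j = i + 2 then (-1 : ℤ) else 0) *
            (if j' = i ∨ j' = i + 2 then (-1 : ℤ) else 0)) = 0 from by
          split_ifs <;> omega]
        rw [sub_zero]
        rcases le_or_gt j i with hj' | hj' <;> rcases le_or_gt j' i with hk' | hk'
        · rw [if_pos hj', if_pos hk']
          exact hAadj' _ _ (by rw [mod_eq_mod_iff (by omega) (by omega)]; omega)
        · rw [if_pos hj', if_neg (by omega)]
          exact hAadj' _ _ (by rw [mod_eq_mod_iff (by omega) (by omega)]; omega)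
        · rw [if_neg (by omega), if_pos hk']
          exact hAadj' _ _ (by rw [mod_eq_mod_iff (by omega) (by omega)]; omega)
        · rw [if_neg (by omega), if_neg (by omega)]
          exact hAadj' _ _ (by rw [mod_eq_mod_iff (by omega) (by omega)]; omega)
  · -- orthogonality
    intro r s hsm hs0 hsp
    obtain ⟨j, hj1, hj2, rfl⟩ := rep r
    obtain ⟨k, hk1, hk2, rfl⟩ := rep s
    have c1 : ¬(k + 1 = j ∨ k + 1 + (n + 1) = j ∨ j + (n + 1) = k + 1) := by
      intro h
      apply hsm
      have hc := (cast_eq_cast_iff (m := n + 1) (a := k + 1) (b := j)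
        (by omega) (by omega)).mpr h
      rw [eq_sub_iff_add_eq]
      push_cast at hc
      exact hc
    have c2 : ¬(k = j ∨ k + (n + 1) = j ∨ j + (n + 1) = k) := fun h =>
      hs0 ((cast_eq_cast_iff (by omega) (by omega)).mpr h)
    have c3 : ¬(k = j + 1 ∨ k + (n + 1) = j + 1 ∨ j + 1 + (n + 1) = k) := by
      intro h
      apply hsp
      have hc := (cast_eq_cast_iff (m := n + 1) (a := k) (b := j + 1)
        (by omega) (by omega)).mpr h
      push_cast at hc
      exact hc
    dsimp only
    by_cases hjR : j = i + 1
    · have hkR : k ≠ i + 1 := by omega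
      rw [hjR, h3, desc k hk1 hk2 hkR]
      dsimp only
      rw [form0, if_neg (by omega)]
      norm_num
    · by_cases hkR : k = i + 1
      · rw [hkR, h3, desc j hj1 hj2 hjR]
        dsimp only
        rw [form0', if_neg (by omega)]
        norm_num
      · by_cases hpair : (j = i ∧ k = i + 2) ∨ (j = i + 2 ∧ k = i)
        · rcases hpair with ⟨hj, hk⟩ | ⟨hj, hk⟩
          · rw [hj, hk, h2, h4]
            dsimp only
            rw [hAadj' i (i + 1) rfl]
            norm_num
          · rw [hj, hk, h4, h2]
            dsimp only
            rw [hsymm, hAadj' i (i + 1) rfl]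
            norm_num
        · rw [desc j hj1 hj2 hjR, desc k hk1 hk2 hkR]
          dsimp only
          rw [show ((if j = i ∨ j = i + 2 then (-1 : ℤ) else 0) *
              (if k = i ∨ k = i + 2 then (-1 : ℤ) else 0)) = 0 from by
            split_ifs <;> omega]
          rw [sub_zero]
          rcases le_or_gt j i with hj' | hj' <;> rcases le_or_gt k i with hk' | hk'
          · rw [if_pos hj', if_pos hk']
            exact horth _ _ (by rw [mod_eq_mod_iff (by omega) (by omega)]; omega)
              (by rw [mod_eq_mod_iff (by omega) (by omega)]; omega)
              (by rw [mod_eq_mod_iff (by omega) (by omega)]; omega)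
          · rw [if_pos hj', if_neg (by omega)]
            exact horth _ _ (by rw [mod_eq_mod_iff (by omega) (by omega)]; omega)
              (by rw [mod_eq_mod_iff (by omega) (by omega)]; omega)
              (by rw [mod_eq_mod_iff (by omega) (by omega)]; omega)
          · rw [if_neg (by omega), if_pos hk']
            exact horth _ _ (by rw [mod_eq_mod_iff (by omega) (by omega)]; omega)
              (by rw [mod_eq_mod_iff (by omega) (by omega)]; omega)
              (by rw [mod_eq_mod_iff (by omega) (by omega)]; omega)
          · rw [if_neg (by omega), if_neg (by omega)]
            exact horth _ _ (by rw [mod_eq_mod_iff (by omega) (by omega)]; omega)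
              (by rw [mod_eq_mod_iff (by omega) (by omega)]; omega)
              (by rw [mod_eq_mod_iff (by omega) (by omega)]; omega)
  · -- the sum
    rw [← zsum_Ico (n + 1) A']
    have split1 : (∑ j ∈ Finset.Ico 1 (n + 1 + 1), A' (j : ZMod (n + 1))) =
        (∑ j ∈ Finset.Ico 1 (i + 2), A' (j : ZMod (n + 1))) +
        (∑ j ∈ Finset.Ico (i + 2) (n + 2), A' (j : ZMod (n + 1))) :=
      (Finset.sum_Ico_consecutive _ (by omega) (by omega)).symm
    have split2 : (∑ j ∈ Finset.Ico 1 (i + 2), A' (j : ZMod (n + 1))) =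
        (∑ j ∈ Finset.Ico 1 (i + 1), A' (j : ZMod (n + 1))) + A' ((i + 1 : ℕ) : ZMod (n + 1)) :=
      Finset.sum_Ico_succ_top (by omega) _
    have split3 : (∑ j ∈ Finset.Ico 1 (i + 1), A' (j : ZMod (n + 1))) =
        (∑ j ∈ Finset.Ico 1 i, A' (j : ZMod (n + 1))) + A' ((i : ℕ) : ZMod (n + 1)) :=
      Finset.sum_Ico_succ_top (by omega) _
    have split4 : (∑ j ∈ Finset.Ico (i + 2) (n + 2), A' (j : ZMod (n + 1))) =
        A' ((i + 2 : ℕ) : ZMod (n + 1)) +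
        (∑ j ∈ Finset.Ico (i + 3) (n + 2), A' (j : ZMod (n + 1))) :=
      Finset.sum_eq_sum_Ico_succ_bot (by omega) _
    rw [split1, split2, split3, split4, h2, h3, h4]
    have e1 : (∑ j ∈ Finset.Ico 1 i, A' (j : ZMod (n + 1))) =
        ∑ j ∈ Finset.Ico 1 i, ((A (j : ZMod n), 0) : V × ℤ) :=
      Finset.sum_congr rfl fun j hj => by
        rw [Finset.mem_Ico] at hj; exact h1 j hj.1 hj.2
    have e2 : (∑ j ∈ Finset.Ico (i + 3) (n + 2), A' (j : ZMod (n + 1))) =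
        ∑ j ∈ Finset.Ico (i + 3) (n + 2), ((A ((j - 1 : ℕ) : ZMod n), 0) : V × ℤ) :=
      Finset.sum_congr rfl fun j hj => by
        rw [Finset.mem_Ico] at hj; exact h5 j (by omega) (by omega)
    rw [e1, e2]
    -- reindex the tail sum
    have e3 : (∑ j ∈ Finset.Ico (i + 3) (n + 2), ((A ((j - 1 : ℕ) : ZMod n), 0) : V × ℤ)) =
        ∑ j ∈ Finset.Ico (i + 2) (n + 1), ((A (j : ZMod n), 0) : V × ℤ) :=
      Finset.sum_nbij' (fun j => j - 1) (fun j => j + 1)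
        (fun a ha => by simp only [Finset.mem_Ico] at *; omega)
        (fun a ha => by simp only [Finset.mem_Ico] at *; omega)
        (fun a ha => by simp only [Finset.mem_Ico] at ha; show a - 1 + 1 = a; omega)
        (fun a ha => by simp only [Finset.mem_Ico] at ha; show a + 1 - 1 = a; omega)
        (fun a ha => rfl)
    rw [e3]
    have keyV : (∑ j ∈ Finset.Ico 1 i, A (j : ZMod n)) + A ((i : ℕ) : ZMod n) +
        A ((i + 1 : ℕ) : ZMod n) + (∑ j ∈ Finset.Ico (i + 2) (n + 1), A (j : ZMod n)) = negK := by
      have t : (∑ j ∈ Finset.Ico 1 (n + 1), A (j : ZMod n)) = negK := by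
        rw [zsum_Ico n A, hAsum]
      have s1 : (∑ j ∈ Finset.Ico 1 (n + 1), A (j : ZMod n)) =
          (∑ j ∈ Finset.Ico 1 (i + 2), A (j : ZMod n)) +
          (∑ j ∈ Finset.Ico (i + 2) (n + 1), A (j : ZMod n)) :=
        (Finset.sum_Ico_consecutive _ (by omega) (by omega)).symm
      have s2 : (∑ j ∈ Finset.Ico 1 (i + 2), A (j : ZMod n)) =
          (∑ j ∈ Finset.Ico 1 (i + 1), A (j : ZMod n)) + A ((i + 1 : ℕ) : ZMod n) :=
        Finset.sum_Ico_succ_top (by omega) _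
      have s3 : (∑ j ∈ Finset.Ico 1 (i + 1), A (j : ZMod n)) =
          (∑ j ∈ Finset.Ico 1 i, A (j : ZMod n)) + A ((i : ℕ) : ZMod n) :=
        Finset.sum_Ico_succ_top (by omega) _
      rw [s1, s2, s3] at t
      rw [← t]
    rw [Prod.ext_iff]
    constructor
    · simp only [Prod.fst_add, Prod.fst_sum]
      rw [← keyV]
      abel
    · simp only [Prod.snd_add, Prod.snd_sum]
      simp
end

section
/- Let $X$ be a rational surface whose Picard lattice has a basis $(H, R_1, \ldots, R_n)$ diagonalizing the intersection form with signature $(1,-1,\ldots,-1)$ (i.e., $H^2 = 1$, $R_i^2 = -1$, all other products 0) and with $-K = 3H - \sum_i R_i$. If $\mathcal{A}$ and $\mathcal{A}'$ are two toric systems on $X$ with $A_i^2 = (A_i')^2$ for all $i$, then there is a lattice automorphism $\phi$ of $\mathrm{Pic}(X)$ preserving the intersection pairing and the canonical class with $\phi(A_i) = A_i'$ for all $i$. -/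
/-- The intersection form of a rational surface in an exceptional basis
`(H, R₁, …, R_n)`: `H² = 1`, `R_i² = -1`, all other products `0`. -/
def excForm (n : ℕ) (v w : Fin (n + 1) → ℤ) : ℤ :=
  v 0 * w 0 - ∑ i : Fin n, v i.succ * w i.succ

/-- The anticanonical class `-K = 3H - ∑ R_i` in the basis `(H, R₁, …, R_n)`. -/
def excNegK (n : ℕ) : Fin (n + 1) → ℤ := fun j => if j = 0 then 3 else -1

namespace ToricAux

open Matrix

/-- The Gram matrix of the exceptional basis. -/
def Fm (n : ℕ) : Matrix (Fin (n + 1)) (Fin (n + 1)) ℤ :=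
  Matrix.diagonal (fun i => if i = 0 then 1 else -1)

lemma excForm_eq (n : ℕ) (v w : Fin (n + 1) → ℤ) :
    excForm n v w = v ⬝ᵥ (Fm n *ᵥ w) := by
  simp [excForm, Fm, dotProduct, Matrix.mulVec_diagonal, Fin.sum_univ_succ,
    Fin.succ_ne_zero, mul_neg, neg_mul, sub_eq_add_neg, Finset.sum_neg_distrib]

lemma excForm_symm (n : ℕ) (v w : Fin (n + 1) → ℤ) :
    excForm n v w = excForm n w v := by
  unfold excForm
  rw [mul_comm]
  congr 1
  exact Finset.sum_congr rfl fun i _ => mul_comm _ _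

lemma excForm_sub_left (n : ℕ) (x y z : Fin (n + 1) → ℤ) :
    excForm n (x - y) z = excForm n x z - excForm n y z := by
  simp [excForm, sub_mul, Finset.sum_sub_distrib]
  ring

lemma gram_apply (n : ℕ) (R S : Matrix (Fin (n + 1)) (Fin (n + 1)) ℤ)
    (i j : Fin (n + 1)) :
    (R * Fm n * Sᵀ) i j = excForm n (R i) (S j) := by
  rw [excForm_eq, Matrix.mul_apply]
  simp only [Fm, Matrix.mul_diagonal, Matrix.transpose_apply, dotProduct,
    Matrix.mulVec_diagonal]
  exact Finset.sum_congr rfl fun k _ => by by_cases h : k = 0 <;> simp [h]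

lemma Fm_mul_self (n : ℕ) : Fm n * Fm n = 1 := by
  rw [Fm, Matrix.diagonal_mul_diagonal]
  ext i j
  rcases eq_or_ne i j with h | h
  · subst h
    by_cases h0 : i = 0 <;> simp [h0, Matrix.one_apply]
  · simp [Matrix.diagonal_apply_ne _ h, Matrix.one_apply_ne h]

instance (n : ℕ) : Invertible (Fm n) := ⟨Fm n, Fm_mul_self n, Fm_mul_self n⟩

lemma cast_inj (n : ℕ) {a b : ℕ} (ha : a < n + 3) (hb : b < n + 3)
    (h : (a : ZMod (n + 3)) = (b : ZMod (n + 3))) : a = b := by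
  have := congrArg ZMod.val h
  rwa [ZMod.val_cast_of_lt ha, ZMod.val_cast_of_lt hb] at this

/-- Key Gale-duality step: the first `n+1` classes of a toric system form a basis
(the relevant minor of the Gram matrix is unitriangular). -/
lemma rows_unit_det (n : ℕ) (A : ZMod (n + 3) → Fin (n + 1) → ℤ)
    (h1 : ∀ i : ZMod (n + 3), excForm n (A i) (A (i + 1)) = 1)
    (h0 : ∀ i j : ZMod (n + 3), j ≠ i - 1 → j ≠ i → j ≠ i + 1 → excForm n (A i) (A j) = 0) :
    IsUnit (Matrix.of fun (i j : Fin (n + 1)) => A (i.val : ZMod (n + 3)) j).det := by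
  set P : Matrix (Fin (n + 1)) (Fin (n + 1)) ℤ :=
    Matrix.of fun (i j : Fin (n + 1)) => A (i.val : ZMod (n + 3)) j with hP
  set Q : Matrix (Fin (n + 1)) (Fin (n + 1)) ℤ :=
    Matrix.of fun (i j : Fin (n + 1)) => A ((i.val : ZMod (n + 3)) + 1) j with hQ
  have hentry : ∀ i j : Fin (n + 1),
      (P * Fm n * Qᵀ) i j = excForm n (A (i.val : ZMod (n + 3))) (A ((j.val : ZMod (n + 3)) + 1)) := by
    intro i j
    rw [gram_apply]
    rfl
  have htri : (P * Fm n * Qᵀ).BlockTriangular OrderDual.toDual := by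
    intro i j hij
    have hij' : (i : Fin (n + 1)) < j := hij
    rw [hentry]
    refine h0 _ _ ?_ ?_ ?_
    · intro h
      have h2 : ((j.val + 2 : ℕ) : ZMod (n + 3)) = ((i.val : ℕ) : ZMod (n + 3)) := by
        push_cast
        rw [show ((j.val : ZMod (n + 3)) + 2) = ((j.val : ZMod (n + 3)) + 1) + 1 by ring, h]
        ring
      have := cast_inj n (by omega) (by omega) h2
      omega
    · intro h
      have h2 : ((j.val + 1 : ℕ) : ZMod (n + 3)) = ((i.val : ℕ) : ZMod (n + 3)) := by
        push_cast; exact h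
      have := cast_inj n (by omega) (by omega) h2
      omega
    · intro h
      have h2 : ((j.val + 1 : ℕ) : ZMod (n + 3)) = ((i.val + 1 : ℕ) : ZMod (n + 3)) := by
        push_cast; exact h
      have := cast_inj n (by omega) (by omega) h2
      omega
  have hdiag : ∀ i : Fin (n + 1), (P * Fm n * Qᵀ) i i = 1 := by
    intro i
    rw [hentry]
    exact h1 _
  have hdet : (P * Fm n * Qᵀ).det = 1 := by
    rw [Matrix.det_of_lowerTriangular _ htri]
    simp [hdiag]
  rw [Matrix.det_mul, Matrix.det_mul] at hdet
  exact IsUnit.of_mul_eq_one (a := P.det) ((Fm n).det * Qᵀ.det) (by rw [← mul_assoc]; exact hdet)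

end ToricAux

open Matrix ToricAux

/-- If two toric systems `A`, `A'` on a rational surface of Picard number `n+1`
(with an exceptional basis diagonalizing the intersection form with signature
`(1, -1, …, -1)` and `-K = 3H - ∑ R_i`) have the same self-intersections `A_i² = A_i'²`,
then some automorphism of the Picard lattice preserving the intersection pairing and
the canonical class carries `A` to `A'`. -/
theorem toricSystems_isometric (n : ℕ) (hn : 1 ≤ n)
    (A A' : ZMod (n + 3) → (Fin (n + 1) → ℤ))
    (hA : IsToricSystem (excForm n) (excNegK n) (n + 3) A)
    (hA' : IsToricSystem (excForm n) (excNegK n) (n + 3) A')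
    (hsq : ∀ i, excForm n (A i) (A i) = excForm n (A' i) (A' i)) :
    ∃ φ : (Fin (n + 1) → ℤ) ≃ₗ[ℤ] (Fin (n + 1) → ℤ),
      (∀ v w, excForm n (φ v) (φ w) = excForm n v w) ∧
      φ (excNegK n) = excNegK n ∧
      ∀ i, φ (A i) = A' i := by
  obtain ⟨h1, h0, hsum⟩ := hA
  obtain ⟨h1', h0', hsum'⟩ := hA'
  -- Gram matrices agree
  have gram : ∀ i j : ZMod (n + 3), excForm n (A i) (A j) = excForm n (A' i) (A' j) := by
    intro i j
    by_cases hji : j = i + 1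
    · subst hji; rw [h1, h1']
    by_cases hje : j = i
    · subst hje; exact hsq _
    by_cases hjm : j = i - 1
    · have hi : i = j + 1 := by rw [hjm]; ring
      rw [excForm_symm, excForm_symm n (A' i), hi, h1, h1']
    · rw [h0 i j hjm hje hji, h0' i j hjm hje hji]
  set P : Matrix (Fin (n + 1)) (Fin (n + 1)) ℤ :=
    Matrix.of fun (i j : Fin (n + 1)) => A (i.val : ZMod (n + 3)) j with hPdef
  set P' : Matrix (Fin (n + 1)) (Fin (n + 1)) ℤ :=
    Matrix.of fun (i j : Fin (n + 1)) => A' (i.val : ZMod (n + 3)) j with hP'def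
  have hPdet : IsUnit P.det := rows_unit_det n A h1 h0
  have hP'det : IsUnit P'.det := rows_unit_det n A' h1' h0'
  letI : Invertible P := P.invertibleOfIsUnitDet hPdet
  letI : Invertible P' := P'.invertibleOfIsUnitDet hP'det
  letI : Invertible Pᵀ := Matrix.invertibleTranspose P
  letI : Invertible P'ᵀ := Matrix.invertibleTranspose P'
  set M : Matrix (Fin (n + 1)) (Fin (n + 1)) ℤ := P'ᵀ * ⅟(Pᵀ) with hMdef
  set Minv : Matrix (Fin (n + 1)) (Fin (n + 1)) ℤ := Pᵀ * ⅟(P'ᵀ) with hMinvdef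
  have hMMinv : M * Minv = 1 := by
    rw [hMdef, hMinvdef, Matrix.mul_assoc, ← Matrix.mul_assoc (⅟(Pᵀ)),
      invOf_mul_self, Matrix.one_mul, mul_invOf_self]
  have hMinvM : Minv * M = 1 := by
    rw [hMdef, hMinvdef, Matrix.mul_assoc, ← Matrix.mul_assoc (⅟(P'ᵀ)),
      invOf_mul_self, Matrix.one_mul, mul_invOf_self]
  -- the Gram matrices of the two bases coincide
  have hGram0 : P * Fm n * Pᵀ = P' * Fm n * P'ᵀ := by
    ext i j
    rw [gram_apply, gram_apply]
    exact gram _ _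
  -- M is an isometry
  have h2 : Pᵀ * ⅟(Pᵀ) = 1 := mul_invOf_self _
  have h3 : (⅟(Pᵀ))ᵀ * P = 1 := by
    have h := congrArg Matrix.transpose h2
    rw [Matrix.transpose_mul, Matrix.transpose_one, Matrix.transpose_transpose] at h
    exact h
  have key : Mᵀ * Fm n * M = Fm n := by
    calc Mᵀ * Fm n * M
        = ((⅟(Pᵀ))ᵀ * P') * Fm n * (P'ᵀ * ⅟(Pᵀ)) := by
          rw [hMdef, Matrix.transpose_mul, Matrix.transpose_transpose]
      _ = (⅟(Pᵀ))ᵀ * (P' * Fm n * P'ᵀ) * ⅟(Pᵀ) := by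
          simp only [Matrix.mul_assoc]
      _ = (⅟(Pᵀ))ᵀ * (P * Fm n * Pᵀ) * ⅟(Pᵀ) := by rw [hGram0]
      _ = ((⅟(Pᵀ))ᵀ * P) * Fm n * (Pᵀ * ⅟(Pᵀ)) := by
          simp only [Matrix.mul_assoc]
      _ = Fm n := by rw [h2, h3, Matrix.one_mul, Matrix.mul_one]
  have hpres : ∀ v w, excForm n (M *ᵥ v) (M *ᵥ w) = excForm n v w := by
    intro v w
    rw [excForm_eq, excForm_eq, Matrix.mulVec_mulVec, Matrix.dotProduct_mulVec,
      Matrix.dotProduct_mulVec, Matrix.vecMul_mulVec, ← Matrix.mul_assoc, key]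
  -- M carries the chosen basis vectors A (e j) to A' (e j)
  have hMP : M * Pᵀ = P'ᵀ := by
    rw [hMdef, Matrix.mul_assoc, invOf_mul_self, Matrix.mul_one]
  have hcolA : ∀ j : Fin (n + 1), A (j.val : ZMod (n + 3)) = Pᵀ *ᵥ Pi.single j 1 := by
    intro j
    funext k
    simp [Matrix.mulVec_single, Matrix.transpose_apply, hPdef]
  have hcolA' : ∀ j : Fin (n + 1), A' (j.val : ZMod (n + 3)) = P'ᵀ *ᵥ Pi.single j 1 := by
    intro j
    funext k
    simp [Matrix.mulVec_single, Matrix.transpose_apply, hP'def]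
  have himg : ∀ j : Fin (n + 1),
      M *ᵥ A (j.val : ZMod (n + 3)) = A' (j.val : ZMod (n + 3)) := by
    intro j
    rw [hcolA, Matrix.mulVec_mulVec, hMP, ← hcolA']
  -- M carries every A i to A' i (nondegeneracy of the form)
  letI : Invertible (Fm n * P'ᵀ) := invertibleMul _ _
  have himgAll : ∀ i : ZMod (n + 3), M *ᵥ A i = A' i := by
    intro i
    set u : Fin (n + 1) → ℤ := M *ᵥ A i - A' i with hu
    have hvm : u ᵥ* (Fm n * P'ᵀ) = 0 := by
      funext j
      have e1 : excForm n (M *ᵥ A i) (A' (j.val : ZMod (n + 3)))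
          = excForm n (A' i) (A' (j.val : ZMod (n + 3))) := by
        conv_lhs => rw [← himg j]
        rw [hpres]
        exact gram _ _
      have hz : excForm n u (A' (j.val : ZMod (n + 3))) = 0 := by
        rw [hu, excForm_sub_left, e1, sub_self]
      have hcomp : (u ᵥ* (Fm n * P'ᵀ)) j = excForm n u (A' (j.val : ZMod (n + 3))) := by
        rw [excForm_eq, hcolA' j, Matrix.mulVec_mulVec]
        simp [Matrix.vecMul, dotProduct, Matrix.mulVec_single]
      rw [hcomp, hz]
      rfl
    have hu0 : u = 0 := by
      have h := congrArg (fun x => x ᵥ* ⅟(Fm n * P'ᵀ)) hvm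
      rw [Matrix.vecMul_vecMul, mul_invOf_self, Matrix.vecMul_one,
        Matrix.zero_vecMul] at h
      exact h
    rw [hu] at hu0
    exact sub_eq_zero.mp hu0
  -- assemble the linear equivalence
  let φ : (Fin (n + 1) → ℤ) ≃ₗ[ℤ] (Fin (n + 1) → ℤ) :=
    LinearEquiv.ofLinear (Matrix.mulVecLin M) (Matrix.mulVecLin Minv)
      (by rw [← Matrix.mulVecLin_mul, hMMinv, Matrix.mulVecLin_one])
      (by rw [← Matrix.mulVecLin_mul, hMinvM, Matrix.mulVecLin_one])
  have hφ : ∀ v, φ v = M *ᵥ v := fun v => rfl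
  refine ⟨φ, ?_, ?_, ?_⟩
  · intro v w
    rw [hφ, hφ]
    exact hpres v w
  · conv_lhs => rw [← hsum]
    conv_rhs => rw [← hsum']
    rw [map_sum]
    exact Finset.sum_congr rfl fun i _ => himgAll i
  · intro i
    rw [hφ]
    exact himgAll i
end

section
/- For a toric system $\mathcal{A}=(A_1,\ldots,A_n)$ on a smooth rational surface $X$ of Picard number $n-2$, the map $\mathrm{Pic}(X) \to \mathbb{Z}^n$, $D \mapsto (D\cdot A_1, \ldots, D\cdot A_n)$, is injective and its cokernel is isomorphic to $\mathbb{Z}^2$ (assuming the intersection form on $\mathrm{Pic}(X)\cong\mathbb{Z}^{n-2}$ is unimodular of signature $(1, n-3)$). -/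
open Matrix

/-- Symmetry of the bilinear form attached to a symmetric matrix. -/
lemma symm_dot {R : Type*} [CommRing R] {k : ℕ} {M : Matrix (Fin k) (Fin k) R}
    (hM : M.IsSymm) (u v : Fin k → R) : u ⬝ᵥ M.mulVec v = v ⬝ᵥ M.mulVec u := by
  rw [dotProduct_mulVec, ← Matrix.mulVec_transpose, hM.eq, dotProduct_comm]

lemma sum_smul_dot {F : Type*} [CommRing F] {ι κ : Type*} [Fintype ι] [Fintype κ]
    (c : ι → F) (v : ι → κ → F) (w : κ → F) :
    (∑ i, c i • v i) ⬝ᵥ w = ∑ i, c i * (v i ⬝ᵥ w) := by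
  simp only [dotProduct, Finset.sum_apply, Pi.smul_apply, smul_eq_mul, Finset.sum_mul,
    Finset.mul_sum, mul_assoc]
  exact Finset.sum_comm

lemma cast_dot {F : Type*} [CommRing F] {k : ℕ} (σ : ℤ →+* F)
    (M : Matrix (Fin k) (Fin k) ℤ) (u v : Fin k → ℤ) :
    (fun t => σ (u t)) ⬝ᵥ (M.map σ).mulVec (fun t => σ (v t)) = σ (u ⬝ᵥ M.mulVec v) := by
  simp [dotProduct, mulVec, map_sum, _root_.map_mul, Finset.mul_sum]

/-- Key lemma over a field: a vector orthogonal (w.r.t. the plain dot product)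
to all members of a toric system is zero. -/
lemma key_field {F : Type*} [Field F] (n : ℕ) [NeZero n] (hn : 4 ≤ n)
    (M : Matrix (Fin (n - 2)) (Fin (n - 2)) F) (hMsymm : M.IsSymm)
    (A : ZMod n → (Fin (n - 2) → F))
    (h1 : ∀ i : ZMod n, A i ⬝ᵥ M.mulVec (A (i + 1)) = 1)
    (h0 : ∀ i j : ZMod n, j ≠ i - 1 → j ≠ i → j ≠ i + 1 → A i ⬝ᵥ M.mulVec (A j) = 0)
    (w : Fin (n - 2) → F) (hw : ∀ i, A i ⬝ᵥ w = 0) : w = 0 := by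
  by_contra hw0
  set φ : (Fin (n - 2) → F) →ₗ[F] F :=
    { toFun := fun v => v ⬝ᵥ w
      map_add' := fun a b => add_dotProduct a b w
      map_smul' := fun c a => smul_dotProduct c a w } with hφ
  have hφsurj : Function.Surjective φ := by
    obtain ⟨j, hj⟩ : ∃ j, w j ≠ 0 := by
      by_contra h; push_neg at h; exact hw0 (funext h)
    intro c
    refine ⟨(c / w j) • (Pi.single j 1 : Fin (n - 2) → F), ?_⟩
    show ((c / w j) • (Pi.single j 1 : Fin (n - 2) → F)) ⬝ᵥ w = c
    rw [smul_dotProduct, single_dotProduct, one_mul, smul_eq_mul, div_mul_cancel₀ _ hj]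
  have hker : Module.finrank F (LinearMap.ker φ) = n - 2 - 1 := by
    have h := LinearMap.finrank_range_add_finrank_ker φ
    rw [LinearMap.range_eq_top.mpr hφsurj] at h
    simp only [finrank_top, Module.finrank_self, Module.finrank_pi, Fintype.card_fin] at h
    omega
  set Ψ : (ZMod n → F) →ₗ[F] (LinearMap.ker φ) × F × F :=
    { toFun := fun x => (⟨∑ i, x i • A i, by
        simp only [LinearMap.mem_ker, hφ, LinearMap.coe_mk, AddHom.coe_mk]
        rw [sum_smul_dot]
        simp [hw]⟩, x 0, x 1)
      map_add' := fun a b => by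
        ext <;> simp [add_smul, Finset.sum_add_distrib]
      map_smul' := fun c a => by
        ext <;> simp [smul_smul, Finset.smul_sum] }
  have hnotinj : ¬ Function.Injective Ψ := by
    intro h
    have hle := LinearMap.finrank_le_finrank_of_injective h
    rw [Module.finrank_pi, ZMod.card] at hle
    rw [Module.finrank_prod, Module.finrank_prod, hker, Module.finrank_self] at hle
    omega
  rw [injective_iff_map_eq_zero] at hnotinj
  push_neg at hnotinj
  obtain ⟨x, hx, hxne⟩ := hnotinj
  have hsum : (∑ i, x i • A i) = 0 :=
    congrArg Subtype.val (congrArg Prod.fst hx)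
  have hx0 : x 0 = 0 := congrArg (fun p => p.2.1) hx
  have hx1 : x 1 = 0 := congrArg (fun p => p.2.2) hx
  have h2ne : (2 : ZMod n) ≠ 0 := by
    have : ((2 : ℕ) : ZMod n) ≠ 0 := by
      rw [Ne, ZMod.natCast_eq_zero_iff]
      intro h; have := Nat.le_of_dvd (by norm_num) h; omega
    simpa using this
  have h1ne : (1 : ZMod n) ≠ 0 := by
    have : ((1 : ℕ) : ZMod n) ≠ 0 := by
      rw [Ne, ZMod.natCast_eq_zero_iff]
      intro h; have := Nat.le_of_dvd (by norm_num) h; omega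
    simpa using this
  have hrec : ∀ j : ZMod n,
      x (j - 1) + (A j ⬝ᵥ M.mulVec (A j)) * x j + x (j + 1) = 0 := by
    intro j
    have h := congrArg (fun u => A j ⬝ᵥ M.mulVec u) hsum
    simp only [mulVec_zero, dotProduct_zero] at h
    rw [symm_dot hMsymm, sum_smul_dot] at h
    have hd1 : j - 1 ≠ j := by
      intro h'
      exact h1ne (left_eq_add.mp (sub_eq_iff_eq_add.mp h'))
    have hd2 : j + 1 ≠ j := by
      intro h'
      exact h1ne (add_eq_left.mp h')
    have hd3 : j - 1 ≠ j + 1 := by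
      intro h'
      have h'' := sub_eq_iff_eq_add.mp h'
      rw [add_assoc] at h''
      have := left_eq_add.mp h''
      apply h2ne
      rw [← this]; norm_num
    have hsplit : ∑ i : ZMod n, x i * (A i ⬝ᵥ M.mulVec (A j)) =
        ∑ i ∈ ({j - 1, j, j + 1} : Finset (ZMod n)), x i * (A i ⬝ᵥ M.mulVec (A j)) := by
      refine (Finset.sum_subset (Finset.subset_univ _) ?_).symm
      intro i _ hi
      simp only [Finset.mem_insert, Finset.mem_singleton, not_or] at hi
      rw [symm_dot hMsymm, h0 j i hi.1 hi.2.1 hi.2.2, mul_zero]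
    rw [hsplit, Finset.sum_insert (by simp [hd1, hd3]),
      Finset.sum_insert (by simp [Ne.symm hd2]), Finset.sum_singleton] at h
    have e1 : A (j - 1) ⬝ᵥ M.mulVec (A j) = 1 := by
      have := h1 (j - 1); rwa [sub_add_cancel] at this
    have e2 : A (j + 1) ⬝ᵥ M.mulVec (A j) = 1 := by
      rw [symm_dot hMsymm]; exact h1 j
    rw [e1, e2] at h
    linear_combination h
  have hnat : ∀ m : ℕ, x ((m : ℕ) : ZMod n) = 0 ∧ x (((m + 1 : ℕ)) : ZMod n) = 0 := by
    intro m
    induction m with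
    | zero => exact ⟨by simpa using hx0, by simpa using hx1⟩
    | succ m ih =>
      refine ⟨by simpa using ih.2, ?_⟩
      have h := hrec (((m + 1 : ℕ)) : ZMod n)
      have e1 : (((m + 1 : ℕ)) : ZMod n) - 1 = ((m : ℕ) : ZMod n) := by push_cast; ring
      have e2 : (((m + 1 : ℕ)) : ZMod n) + 1 = (((m + 2 : ℕ)) : ZMod n) := by push_cast; ring
      rw [e1, e2, ih.1, ih.2] at h
      have : x (((m + 2 : ℕ)) : ZMod n) = 0 := by linear_combination h
      simpa [Nat.add_assoc] using this
  apply hxne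
  funext j
  obtain ⟨m, rfl⟩ := ZMod.natCast_zmod_surjective j
  exact (hnat m).1

/-- Over any field, if all pairings of `D` with the toric system vanish after applying
`σ : ℤ →+* F`, then `σ ∘ D = 0`. -/
lemma main_aux {F : Type*} [Field F] (n : ℕ) [NeZero n] (hn : 4 ≤ n) (σ : ℤ →+* F)
    (M : Matrix (Fin (n - 2)) (Fin (n - 2)) ℤ) (hMsymm : M.IsSymm)
    (hMdet : IsUnit M.det)
    (A : ZMod n → (Fin (n - 2) → ℤ))
    (h1 : ∀ i : ZMod n, A i ⬝ᵥ M.mulVec (A (i + 1)) = 1)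
    (h0 : ∀ i j : ZMod n, j ≠ i - 1 → j ≠ i → j ≠ i + 1 → A i ⬝ᵥ M.mulVec (A j) = 0)
    (D : Fin (n - 2) → ℤ)
    (hD : ∀ i : ZMod n, σ (D ⬝ᵥ M.mulVec (A i)) = 0) :
    ∀ t, σ (D t) = 0 := by
  set M' := M.map σ with hM'
  set A' : ZMod n → (Fin (n - 2) → F) := fun i => fun t => σ (A i t) with hA'
  set D' : Fin (n - 2) → F := fun t => σ (D t) with hD'
  have h1' : ∀ i : ZMod n, A' i ⬝ᵥ M'.mulVec (A' (i + 1)) = 1 := by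
    intro i; rw [hA', cast_dot σ, h1 i, _root_.map_one]
  have h0' : ∀ i j : ZMod n, j ≠ i - 1 → j ≠ i → j ≠ i + 1 → A' i ⬝ᵥ M'.mulVec (A' j) = 0 := by
    intro i j e1 e2 e3; rw [hA', cast_dot σ, h0 i j e1 e2 e3, _root_.map_zero]
  have hMsymm' : M'.IsSymm := hMsymm.map σ
  have hw : ∀ i : ZMod n, A' i ⬝ᵥ (M'.mulVec D') = 0 := by
    intro i
    have : A' i ⬝ᵥ M'.mulVec D' = σ (A i ⬝ᵥ M.mulVec D) := cast_dot σ M (A i) D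
    rw [this, symm_dot hMsymm, hD i]
  have hMD : M'.mulVec D' = 0 := key_field n hn M' hMsymm' A' h1' h0' _ hw
  have hdet' : IsUnit M'.det := by
    rw [hM', ← RingHom.mapMatrix_apply, ← RingHom.map_det]
    exact hMdet.map σ
  have : D' = 0 := by
    have h := congrArg (fun v => M'⁻¹.mulVec v) hMD
    simpa [mulVec_mulVec, Matrix.nonsing_inv_mul M' hdet'] using h
  intro t
  exact congrFun this t

/-- Gale duality exact sequence: for a toric system `A = (A_1, …, A_n)` on a smooth
rational surface of Picard number `n - 2`, whose Picard lattice is `ℤ^{n-2}` with a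
unimodular symmetric intersection form of signature `(1, n-3)` (encoded by a symmetric
integer matrix `M` with `det M = ±1`, possessing a vector of positive square but no
two-dimensional positive-definite subspace over `ℚ`), the map
`D ↦ (D·A_1, …, D·A_n)` is injective with cokernel isomorphic to `ℤ²`. -/
theorem galeDuality_exact (n : ℕ) [NeZero n] (hn : 4 ≤ n)
    (M : Matrix (Fin (n - 2)) (Fin (n - 2)) ℤ) (hMsymm : M.IsSymm)
    (hMdet : IsUnit M.det)
    (hpos : ∃ x : Fin (n - 2) → ℚ,
      0 < x ⬝ᵥ (M.map (Int.cast : ℤ → ℚ)).mulVec x)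
    (hind : ∀ x y : Fin (n - 2) → ℚ,
      (∀ a b : ℚ, ¬ (a = 0 ∧ b = 0) →
        0 < (a • x + b • y) ⬝ᵥ (M.map (Int.cast : ℤ → ℚ)).mulVec (a • x + b • y)) →
      ¬ LinearIndependent ℚ ![x, y])
    (negK : Fin (n - 2) → ℤ)
    (A : ZMod n → (Fin (n - 2) → ℤ))
    (hA : IsToricSystem (fun v w => v ⬝ᵥ M.mulVec w) negK n A)
    (f : (Fin (n - 2) → ℤ) →ₗ[ℤ] (ZMod n → ℤ))
    (hf : ∀ D i, f D i = D ⬝ᵥ M.mulVec (A i)) :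
    Function.Injective f ∧
    Nonempty (((ZMod n → ℤ) ⧸ LinearMap.range f) ≃ₗ[ℤ] (Fin 2 → ℤ)) := by
  obtain ⟨h1A, h0A, -⟩ := hA
  -- injectivity
  have hinj : Function.Injective f := by
    have H : ∀ D, f D = 0 → D = 0 := by
      intro D hD
      funext t
      have := main_aux n hn (Int.castRingHom ℚ) M hMsymm hMdet A h1A h0A D
        (fun i => by
          rw [← hf D i]
          simp [congrFun hD i]) t
      simp only [Pi.zero_apply]
      have h2 : ((D t : ℤ) : ℚ) = 0 := this
      exact_mod_cast h2
    intro a b hab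
    have h := H (a - b) (by rw [map_sub, hab, sub_self])
    exact sub_eq_zero.mp h
  refine ⟨hinj, ?_⟩
  -- divisibility mod primes
  have hmodp : ∀ (p : ℕ), p.Prime → ∀ D : Fin (n - 2) → ℤ,
      (∀ i, (p : ℤ) ∣ f D i) → ∀ t, (p : ℤ) ∣ D t := by
    intro p hp D hdvd t
    haveI : Fact p.Prime := ⟨hp⟩
    have := main_aux n hn (Int.castRingHom (ZMod p)) M hMsymm hMdet A h1A h0A D
      (fun i => by
        show ((D ⬝ᵥ M.mulVec (A i) : ℤ) : ZMod p) = 0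
        rw [← hf D i]
        exact (ZMod.intCast_zmod_eq_zero_iff_dvd _ p).mpr (hdvd i)) t
    exact (ZMod.intCast_zmod_eq_zero_iff_dvd _ p).mp this
  -- saturation of the range
  have hsat : ∀ (m : ℤ), m ≠ 0 → ∀ y : ZMod n → ℤ,
      m • y ∈ LinearMap.range f → y ∈ LinearMap.range f := by
    suffices H : ∀ (N : ℕ) (m : ℤ), m.natAbs ≤ N → m ≠ 0 → ∀ y : ZMod n → ℤ,
        m • y ∈ LinearMap.range f → y ∈ LinearMap.range f by
      intro m hm
      exact H m.natAbs m le_rfl hm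
    intro N
    induction N with
    | zero =>
      intro m hmle hm0
      exfalso
      exact hm0 (Int.natAbs_eq_zero.mp (Nat.le_zero.mp hmle))
    | succ N ih =>
      intro m hmle hm0 y hy
      obtain ⟨D, hD⟩ := hy
      by_cases h1m : m.natAbs = 1
      · rcases Int.natAbs_eq_iff.mp h1m with h | h
        · exact ⟨D, by rw [hD, h]; simp⟩
        · refine ⟨-D, ?_⟩
          rw [_root_.map_neg, hD, h]
          funext i
          simp
      · obtain ⟨p, pp, hpdvd⟩ := Nat.exists_prime_and_dvd h1m
        have hpm : (p : ℤ) ∣ m := Int.dvd_natAbs.mp (Int.natCast_dvd_natCast.mpr hpdvd)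
        obtain ⟨m', rfl⟩ := hpm
        have hp0 : (p : ℤ) ≠ 0 := by exact_mod_cast pp.ne_zero
        have hm'0 : m' ≠ 0 := by
          rintro rfl; simp at hm0
        have hDdvd : ∀ t, (p : ℤ) ∣ D t := by
          refine hmodp p pp D (fun i => ?_)
          exact ⟨m' * y i, by
            rw [hD]
            simp only [Pi.smul_apply, smul_eq_mul]
            ring⟩
        choose D1 hD1 using hDdvd
        have hDfull : D = (p : ℤ) • D1 := funext fun t => by
          rw [hD1 t]; rfl
        have hfD1 : f D1 = m' • y := by
          have hc : (p : ℤ) • f D1 = (p : ℤ) • (m' • y) := by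
            rw [← f.map_smul, ← hDfull, hD, smul_smul]
          exact smul_right_injective _ hp0 hc
        refine ih m' ?_ hm'0 y ⟨D1, hfD1⟩
        have h2 : 2 ≤ p := pp.two_le
        have habs : ((p : ℤ) * m').natAbs = p * m'.natAbs := by
          rw [Int.natAbs_mul, Int.natAbs_natCast]
        have hm'pos : 1 ≤ m'.natAbs := by
          rcases Nat.eq_zero_or_pos m'.natAbs with h | h
          · exact absurd (Int.natAbs_eq_zero.mp h) hm'0
          · exact h
        rw [habs] at hmle
        have hmul : 2 * m'.natAbs ≤ p * m'.natAbs := Nat.mul_le_mul_right _ h2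
        omega
  -- the quotient is finite, torsion-free, hence free
  haveI hQtf : NoZeroSMulDivisors ℤ ((ZMod n → ℤ) ⧸ LinearMap.range f) := by
    refine ⟨fun {m q} h => ?_⟩
    by_cases hm : m = 0
    · exact Or.inl hm
    · right
      obtain ⟨y, rfl⟩ := Submodule.mkQ_surjective _ q
      rw [← LinearMap.map_smul, Submodule.mkQ_apply, Submodule.Quotient.mk_eq_zero] at h
      rw [Submodule.mkQ_apply, Submodule.Quotient.mk_eq_zero]
      exact hsat m hm y h
  haveI : Module.Finite ℤ ((ZMod n → ℤ) ⧸ LinearMap.range f) := inferInstance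
  haveI : Module.Free ℤ ((ZMod n → ℤ) ⧸ LinearMap.range f) :=
    Module.free_of_finite_type_torsion_free'
  -- split the exact sequence
  obtain ⟨l, hl⟩ := Module.projective_lifting_property (LinearMap.range f).mkQ LinearMap.id
    (Submodule.mkQ_surjective _)
  have hexact := LinearMap.exact_map_mkQ_range f
  obtain ⟨e, -, -⟩ := (hexact.splitSurjectiveEquiv hinj) ⟨l, hl⟩
  have hrank : Module.finrank ℤ ((ZMod n → ℤ) ⧸ LinearMap.range f) = 2 := by
    have h := e.finrank_eq
    rw [Module.finrank_prod, Module.finrank_pi, Module.finrank_pi, ZMod.card,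
      Fintype.card_fin] at h
    omega
  exact ⟨(Module.finBasisOfFinrankEq ℤ _ hrank).equivFun⟩
end
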